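/- arXiv:2208.13388 — 2 statements merged into one kernel-verified Lean document; each statement's English description precedes it below -/
import Mathlib

section
/- Let f : ℝ → ℝ be strictly convex and strictly increasing, and define F : ℝ² → ℝ² by F(x,y) = (x, f(y)). Let u = (x_u, y_u), v = (x_v, y_v), w = (x_w, y_w) be points with x_u < x_v, x_u ≤ x_w ≤ x_v, and w ∉ Δ_{uv}. Then: (i) w lies strictly above the segment [u,v] if and only if F(w) lies strictly above the segment [F(u), F(v)]; and (ii) if w lies strictly below the segment [u,v], then F(w) lies strictly below the segment [F(u), F(v)]. -/
lemma combo3_mem {E : Type*} [AddCommGroup E] [Module ℝ E] (u v c : E) {α β γ : ℝ}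
    (ha : 0 ≤ α) (hb : 0 ≤ β) (hc : 0 ≤ γ) (habc : α + β + γ = 1) :
    α • u + β • v + γ • c ∈ convexHull ℝ ({u, v, c} : Set E) := by
  have hu : u ∈ convexHull ℝ ({u,v,c} : Set E) := subset_convexHull ℝ _ (by simp)
  have hv : v ∈ convexHull ℝ ({u,v,c} : Set E) := subset_convexHull ℝ _ (by simp)
  have hcm : c ∈ convexHull ℝ ({u,v,c} : Set E) := subset_convexHull ℝ _ (by simp)
  rcases eq_or_lt_of_le (by positivity : (0:ℝ) ≤ β + γ) with h | h
  · have hb0 : β = 0 := by linarith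
    have hc0 : γ = 0 := by linarith
    have hα : α = 1 := by linarith
    simpa [hb0, hc0, hα] using hu
  · have hr : (β/(β+γ)) • v + (γ/(β+γ)) • c ∈ convexHull ℝ ({u,v,c} : Set E) :=
      (convex_convexHull ℝ _) hv hcm (by positivity) (by positivity) (by field_simp)
    have h2 := (convex_convexHull ℝ _) hu hr ha (le_of_lt h) (by linarith)
    have e1 : (β+γ) * (β/(β+γ)) = β := by field_simp
    have e2 : (β+γ) * (γ/(β+γ)) = γ := by field_simp
    rw [smul_add, smul_smul, smul_smul, e1, e2, ← add_assoc] at h2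
    exact h2


/-- The third corner of the axis-aligned right triangle on `u`, `v`: its x-coordinate is
that of the point of {u,v} with smaller y-coordinate, its y-coordinate that of the point
with larger y-coordinate. -/
noncomputable def triCorner (u v : ℝ × ℝ) : ℝ × ℝ :=
  if u.2 < v.2 then (u.1, v.2) else (v.1, u.2)

/-- `Δ_{uv}`: the open interior of the axis-aligned right triangle with corners
`u`, `v` and `triCorner u v`; empty if `u` and `v` are horizontally or vertically aligned. -/
noncomputable def triDelta (u v : ℝ × ℝ) : Set (ℝ × ℝ) :=
  if u.1 = v.1 ∨ u.2 = v.2 then ∅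
  else interior (convexHull ℝ {u, v, triCorner u v})

lemma mem_tri (xu yu xv yv : ℝ) (hx : xu < xv) (hy : yu ≠ yv) (xw yw : ℝ)
    (h1 : xu < xw) (h2 : xw < xv) (h3 : yw < max yu yv)
    (h4 : (xv - xw) * yu + (xw - xu) * yv < yw * (xv - xu)) :
    (xw, yw) ∈ triDelta (xu, yu) (xv, yv) := by
  rw [triDelta, if_neg (by simp [hx.ne, hy])]
  set U : Set (ℝ × ℝ) := {q | xu < q.1} ∩ {q | q.1 < xv} ∩ {q | q.2 < max yu yv} ∩
      {q | (xv - q.1) * yu + (q.1 - xu) * yv < q.2 * (xv - xu)} with hU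
  have hUopen : IsOpen U := by
    refine (((isOpen_lt continuous_const continuous_fst).inter
      (isOpen_lt continuous_fst continuous_const)).inter
      (isOpen_lt continuous_snd continuous_const)).inter
      (isOpen_lt (by fun_prop) (by fun_prop))
  have hmem : (xw, yw) ∈ U := ⟨⟨⟨h1, h2⟩, h3⟩, h4⟩
  refine interior_maximal ?_ hUopen hmem
  rintro ⟨x, y⟩ ⟨⟨⟨q1, q2⟩, q3⟩, q4⟩
  simp only [Set.mem_setOf_eq] at q1 q2 q3 q4
  have hd : (0:ℝ) < xv - xu := by linarith
  rcases lt_or_gt_of_ne hy with hlt | hgt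
  · -- yu < yv, corner = (xu, yv)
    have he : (0:ℝ) < yv - yu := by linarith
    have hcor : triCorner (xu, yu) (xv, yv) = (xu, yv) := by simp [triCorner, hlt]
    rw [hcor]
    have hy3 : y < yv := by simpa [max_eq_right hlt.le] using q3
    set α := (yv - y) / (yv - yu) with hα
    set β := (x - xu) / (xv - xu) with hβ
    set γ := 1 - α - β with hγ
    have ha : 0 ≤ α := div_nonneg (by linarith) he.le
    have hb : 0 ≤ β := div_nonneg (by linarith) hd.le
    have key : (x - xu) * (yv - yu) ≤ (y - yu) * (xv - xu) := by nlinarith [q4]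
    have hcge : 0 ≤ γ := by
      have e1 : γ = ((y - yu) * (xv - xu) - (x - xu) * (yv - yu)) / ((yv - yu) * (xv - xu)) := by
        rw [hγ, hα, hβ]; field_simp; ring
      rw [e1]
      exact div_nonneg (by linarith) (by positivity)
    have heq : ((x, y) : ℝ × ℝ) = α • (xu, yu) + β • (xv, yv) + γ • (xu, yv) := by
      rw [Prod.ext_iff]
      constructor <;> simp [Prod.smul_def, hγ] <;> simp only [hα, hβ] <;> field_simp <;> ring
    rw [heq]
    exact combo3_mem _ _ _ ha hb hcge (by ring)
  · -- yv < yu, corner = (xv, yu)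
    have he : (0:ℝ) < yu - yv := by linarith
    have hcor : triCorner (xu, yu) (xv, yv) = (xv, yu) := by
      simp [triCorner, not_lt.mpr hgt.le]
    rw [hcor]
    have hy3 : y < yu := by simpa [max_eq_left hgt.le] using q3
    set α := (xv - x) / (xv - xu) with hα
    set β := (yu - y) / (yu - yv) with hβ
    set γ := 1 - α - β with hγ
    have ha : 0 ≤ α := div_nonneg (by linarith) hd.le
    have hb : 0 ≤ β := div_nonneg (by linarith) he.le
    have key : (yu - y) * (xv - xu) ≤ (x - xu) * (yu - yv) := by nlinarith [q4]
    have hcge : 0 ≤ γ := by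
      have e1 : γ = ((x - xu) * (yu - yv) - (yu - y) * (xv - xu)) / ((xv - xu) * (yu - yv)) := by
        rw [hγ, hα, hβ]; field_simp; ring
      rw [e1]
      exact div_nonneg (by linarith) (by positivity)
    have heq : ((x, y) : ℝ × ℝ) = α • (xu, yu) + β • (xv, yv) + γ • (xv, yu) := by
      rw [Prod.ext_iff]
      constructor <;> simp [Prod.smul_def, hγ] <;> simp only [hα, hβ] <;> field_simp <;> ring
    rw [heq]
    exact combo3_mem _ _ _ ha hb hcge (by ring)

theorem stmt_3_aux (f : ℝ → ℝ)
    (hconv : ∀ t : ℝ, 0 < t → t < 1 → ∀ a b : ℝ, a ≠ b →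
      f (t * a + (1 - t) * b) < t * f a + (1 - t) * f b)
    (hmono : StrictMono f)
    (xu yu xv yv xw yw : ℝ) (hx : xu < xv) (hwl : xu ≤ xw) (hwr : xw ≤ xv)
    (htri : ¬ (xu < xw ∧ xw < xv ∧ yw < max yu yv ∧ yu ≠ yv ∧
        (xv - xw) * yu + (xw - xu) * yv < yw * (xv - xu))) :
    (yw * (xv - xu) > (xv - xw) * yu + (xw - xu) * yv ↔
      f yw * (xv - xu) > (xv - xw) * f yu + (xw - xu) * f yv) ∧
    (yw * (xv - xu) < (xv - xw) * yu + (xw - xu) * yv →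
      f yw * (xv - xu) < (xv - xw) * f yu + (xw - xu) * f yv) := by
  have hd : (0:ℝ) < xv - xu := by linarith
  set t := (xw - xu) / (xv - xu) with ht
  have ht0 : 0 ≤ t := div_nonneg (by linarith) hd.le
  have ht1 : t ≤ 1 := by rw [ht, div_le_one hd]; linarith
  have key : ∀ A B C : ℝ, ((xv - xw) * B + (xw - xu) * C < A * (xv - xu)) ↔
      ((1 - t) * B + t * C < A) := by
    intro A B C
    have e : (xv - xw) * B + (xw - xu) * C = ((1 - t) * B + t * C) * (xv - xu) := by
      rw [ht]; field_simp; ring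
    rw [e, mul_lt_mul_iff_of_pos_right hd]
  have convA : f ((1 - t) * yu + t * yv) ≤ (1 - t) * f yu + t * f yv := by
    rcases eq_or_ne yu yv with h | h
    · subst h
      have e : (1 - t) * yu + t * yu = yu := by ring
      rw [e]; linarith
    · rcases ht0.eq_or_lt with h0 | h0
      · rw [← h0]; simp
      · rcases ht1.eq_or_lt with h1 | h1
        · rw [h1]; simp
        · have := hconv (1 - t) (by linarith) (by linarith) yu yv h
          have e : 1 - (1 - t) = t := by ring
          rw [e] at this
          linarith
  have hmonole : ∀ a b : ℝ, a ≤ b → f a ≤ f b := fun a b h => hmono.monotone h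
  refine ⟨⟨?_, ?_⟩, ?_⟩
  · -- yw above ⇒ f yw above
    rw [gt_iff_lt, gt_iff_lt, key, key]
    intro h
    rcases eq_or_ne yu yv with hyeq | hyne
    · have hlt : yu < yw := by rw [hyeq] at h ⊢; nlinarith
      have := hmono hlt
      rw [hyeq] at this ⊢
      nlinarith
    · -- yu ≠ yv : need yw ≥ max yu yv (from htri) unless on vertical edges
      rcases ht0.eq_or_lt with h0 | h0
      · -- t = 0 : xw = xu
        have : (1 - t) * yu + t * yv = yu := by rw [← h0]; ring
        rw [this] at h
        have := hmono h
        rw [← h0]; simpa using this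
      · rcases ht1.eq_or_lt with h1 | h1
        · have : (1 - t) * yu + t * yv = yv := by rw [h1]; ring
          rw [this] at h
          have := hmono h
          rw [h1]; simpa using this
        · have hxl : xu < xw := by
            have : 0 < xw - xu := by
              have := mul_pos h0 hd
              rw [ht] at this
              calc (0:ℝ) < (xw - xu) / (xv - xu) * (xv - xu) := this
                _ = xw - xu := by field_simp
            linarith
          have hxr : xw < xv := by
            have h2 : t * (xv - xu) < 1 * (xv - xu) := by
              exact mul_lt_mul_of_pos_right h1 hd
            rw [ht] at h2
            have : (xw - xu) / (xv - xu) * (xv - xu) = xw - xu := by field_simp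
            rw [this, one_mul] at h2
            linarith
          have hab : (xv - xw) * yu + (xw - xu) * yv < yw * (xv - xu) := by
            rw [key]; exact h
          have hge : max yu yv ≤ yw := by
            by_contra hc
            push_neg at hc
            exact htri ⟨hxl, hxr, hc, hyne, hab⟩
          rcases lt_or_gt_of_ne hyne with hlt | hgt
          · have : f yv ≤ f yw := hmonole _ _ (le_trans (le_max_right _ _) hge)
            have hflt : f yu < f yv := hmono hlt
            nlinarith
          · have : f yu ≤ f yw := hmonole _ _ (le_trans (le_max_left _ _) hge)
            have hflt : f yv < f yu := hmono hgt
            nlinarith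
  · -- f yw above ⇒ yw above (contrapositive)
    rw [gt_iff_lt, gt_iff_lt, key, key]
    intro h
    by_contra hc
    push_neg at hc
    have : f yw ≤ f ((1 - t) * yu + t * yv) := hmonole _ _ hc
    linarith
  · -- below
    have key2 : ∀ A B C : ℝ, (A * (xv - xu) < (xv - xw) * B + (xw - xu) * C) ↔
        (A < (1 - t) * B + t * C) := by
      intro A B C
      have e : (xv - xw) * B + (xw - xu) * C = ((1 - t) * B + t * C) * (xv - xu) := by
        rw [ht]; field_simp; ring
      rw [e, mul_lt_mul_iff_of_pos_right hd]
    rw [key2, key2]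
    intro h
    have : f yw < f ((1 - t) * yu + t * yv) := hmono h
    linarith

/-- Let f be strictly convex and strictly increasing, F(x,y) = (x, f y).
For u, v, w with x_u < x_v, x_u ≤ x_w ≤ x_v and w ∉ Δ_{uv}:
(i) w is strictly above [u,v] iff F(w) is strictly above [F(u),F(v)];
(ii) if w is strictly below [u,v] then F(w) is strictly below [F(u),F(v)]. -/
theorem stmt_3 (f : ℝ → ℝ)
    (hconv : ∀ t : ℝ, 0 < t → t < 1 → ∀ a b : ℝ, a ≠ b →
      f (t * a + (1 - t) * b) < t * f a + (1 - t) * f b)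
    (hmono : StrictMono f)
    (xu yu xv yv xw yw : ℝ) (hx : xu < xv) (hwl : xu ≤ xw) (hwr : xw ≤ xv)
    (hw : (xw, yw) ∉ triDelta (xu, yu) (xv, yv)) :
    (yw * (xv - xu) > (xv - xw) * yu + (xw - xu) * yv ↔
      f yw * (xv - xu) > (xv - xw) * f yu + (xw - xu) * f yv) ∧
    (yw * (xv - xu) < (xv - xw) * yu + (xw - xu) * yv →
      f yw * (xv - xu) < (xv - xw) * f yu + (xw - xu) * f yv) := by
  refine stmt_3_aux f hconv hmono xu yu xv yv xw yw hx hwl hwr ?_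
  rintro ⟨h1, h2, h3, h4, h5⟩
  exact hw (mem_tri xu yu xv yv hx h4 xw yw h1 h2 h3 h5)
end

section
/- Let V be a finite set, let p : V → ℤ × ℤ be injective (with p(v) viewed as a point of ℝ²), and let E be a set of unordered pairs of distinct elements of V (the edges). Assume the straight-line drawing p is planar: for every edge {u,v} ∈ E, the closed segment [p(u), p(v)] contains no point p(w) with w ∉ {u,v}; and for any two distinct edges e1 = {u,v} and e2 = {a,b}, the closed segments [p(u),p(v)] and [p(a),p(b)] are disjoint if e1 and e2 share no vertex, and intersect exactly in the point p(z) if they share exactly the vertex z. Assume further that p is liftable: for every edge {u,v} ∈ E and every w ∈ V, p(w) ∉ Δ_{p(u)p(v)}. Let f : ℝ → ℝ be strictly convex and strictly increasing, and define q : V → ℝ² by q(v) = (x-coordinate of p(v), f(y-coordinate of p(v))). Then the drawing q satisfies the same planarity conditions: for every edge {u,v} ∈ E the closed segment [q(u), q(v)] contains no q(w) with w ∉ {u,v}, and for any two distinct edges, their closed segments under q are disjoint if the edges share no vertex, and intersect exactly in the image of the shared vertex if they share exactly one vertex. -/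
namespace Stmt4Aux

noncomputable def lam (a b x : ℝ) : ℝ := (b - x) / (b - a)

lemma lam_combo {a b : ℝ} (h : a ≠ b) (x : ℝ) :
    lam a b x * a + (1 - lam a b x) * b = x := by
  have hb : b - a ≠ 0 := sub_ne_zero.2 (Ne.symm h)
  unfold lam; field_simp
  ring

lemma lam_self {a b : ℝ} (h : a ≠ b) : lam a b a = 1 := by
  have hb : b - a ≠ 0 := sub_ne_zero.2 (Ne.symm h)
  unfold lam; field_simp

lemma lam_other (a b : ℝ) : lam a b b = 0 := by simp [lam]

lemma lam_of_combo {a b : ℝ} (h : a ≠ b) (s : ℝ) :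
    lam a b (s * a + (1 - s) * b) = s := by
  have hb : b - a ≠ 0 := sub_ne_zero.2 (Ne.symm h)
  unfold lam; field_simp
  ring

lemma lam_mem {a b x : ℝ} (h : a ≠ b) (h1 : min a b ≤ x) (h2 : x ≤ max a b) :
    0 ≤ lam a b x ∧ lam a b x ≤ 1 := by
  unfold lam
  rcases h.lt_or_gt with hab | hab
  · rw [min_eq_left hab.le] at h1; rw [max_eq_right hab.le] at h2
    constructor
    · apply div_nonneg <;> linarith
    · rw [div_le_one (by linarith)]; linarith
  · rw [min_eq_right hab.le] at h1; rw [max_eq_left hab.le] at h2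
    have hba : b - a < 0 := by linarith
    constructor
    · rw [div_nonneg_iff]; right; constructor <;> linarith
    · rw [div_le_one_iff]; right; right; constructor <;> linarith

lemma lam_mem_strict {a b x : ℝ} (h : a ≠ b) (h1 : min a b < x) (h2 : x < max a b) :
    0 < lam a b x ∧ lam a b x < 1 := by
  unfold lam
  rcases h.lt_or_gt with hab | hab
  · rw [min_eq_left hab.le] at h1; rw [max_eq_right hab.le] at h2
    constructor
    · apply div_pos <;> linarith
    · rw [div_lt_one (by linarith)]; linarith
  · rw [min_eq_right hab.le] at h1; rw [max_eq_left hab.le] at h2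
    have hba : b - a < 0 := by linarith
    constructor
    · rw [div_pos_iff]; right; constructor <;> linarith
    · rw [div_lt_one_iff]; right; right; constructor <;> linarith

lemma lam_affine {a b : ℝ} (h : a ≠ b) (p q μ : ℝ) :
    lam a b ((1 - μ) * p + μ * q) = (1 - μ) * lam a b p + μ * lam a b q := by
  have hb : b - a ≠ 0 := sub_ne_zero.2 (Ne.symm h)
  unfold lam; field_simp
  ring

lemma combo_le_max {s : ℝ} (h0 : 0 ≤ s) (h1 : s ≤ 1) (a b : ℝ) :
    s * a + (1 - s) * b ≤ max a b := by
  rcases le_total a b with h | h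
  · rw [max_eq_right h]; nlinarith
  · rw [max_eq_left h]; nlinarith

lemma min_le_combo {s : ℝ} (h0 : 0 ≤ s) (h1 : s ≤ 1) (a b : ℝ) :
    min a b ≤ s * a + (1 - s) * b := by
  rcases le_total a b with h | h
  · rw [min_eq_left h]; nlinarith
  · rw [min_eq_right h]; nlinarith

lemma combo_lt_max {s a b : ℝ} (h0 : 0 < s) (h1 : s < 1) (hab : a ≠ b) :
    s * a + (1 - s) * b < max a b := by
  rcases hab.lt_or_gt with h | h
  · rw [max_eq_right h.le]; nlinarith
  · rw [max_eq_left h.le]; nlinarith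

lemma min_lt_combo {s a b : ℝ} (h0 : 0 < s) (h1 : s < 1) (hab : a ≠ b) :
    min a b < s * a + (1 - s) * b := by
  rcases hab.lt_or_gt with h | h
  · rw [min_eq_left h.le]; nlinarith
  · rw [min_eq_right h.le]; nlinarith

lemma fcombo_le {f : ℝ → ℝ}
    (hconv : ∀ t : ℝ, 0 < t → t < 1 → ∀ a b : ℝ, a ≠ b →
      f (t * a + (1 - t) * b) < t * f a + (1 - t) * f b)
    {s : ℝ} (hs0 : 0 ≤ s) (hs1 : s ≤ 1) (a b : ℝ) :
    f (s * a + (1 - s) * b) ≤ s * f a + (1 - s) * f b := by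
  rcases eq_or_lt_of_le hs0 with h | h
  · rw [← h, show (0:ℝ) * a + (1 - 0) * b = b by ring,
      show (0:ℝ) * f a + (1 - 0) * f b = f b by ring]
  · rcases eq_or_lt_of_le hs1 with h' | h'
    · rw [h']; rw [show (1:ℝ) * a + (1 - 1) * b = a by ring,
        show (1:ℝ) * f a + (1 - 1) * f b = f a by ring]
    · by_cases hab : a = b
      · rw [hab, show s * b + (1 - s) * b = b by ring, show s * f b + (1 - s) * f b = f b by ring]
      · exact (hconv s h h' a b hab).le

lemma combo_pair (s : ℝ) (x y : ℝ × ℝ) :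
    s • x + (1 - s) • y = (s * x.1 + (1 - s) * y.1, s * x.2 + (1 - s) * y.2) := by
  simp [Prod.ext_iff]

lemma seg_param {x y z : ℝ × ℝ} (h : z ∈ segment ℝ x y) :
    ∃ s : ℝ, 0 ≤ s ∧ s ≤ 1 ∧ z = s • x + (1 - s) • y := by
  obtain ⟨a, b, ha, hb, hab, hz⟩ := h
  refine ⟨a, ha, by linarith, ?_⟩
  rw [show (1 : ℝ) - a = b by linarith, hz]

lemma param_seg {s : ℝ} (h0 : 0 ≤ s) (h1 : s ≤ 1) (x y : ℝ × ℝ) :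
    s • x + (1 - s) • y ∈ segment ℝ x y :=
  ⟨s, 1 - s, h0, by linarith, by ring, rfl⟩

lemma vert_mem {c y1 y2 y : ℝ} (h1 : min y1 y2 ≤ y) (h2 : y ≤ max y1 y2) :
    ((c, y) : ℝ × ℝ) ∈ segment ℝ (c, y1) (c, y2) := by
  by_cases h : y1 = y2
  · subst h
    rw [min_self] at h1; rw [max_self] at h2
    have hy : y = y1 := le_antisymm h2 h1
    rw [hy]
    exact left_mem_segment ℝ _ _
  · obtain ⟨hσ0, hσ1⟩ := lam_mem h h1 h2
    refine ⟨lam y1 y2 y, 1 - lam y1 y2 y, hσ0, by linarith, by ring, ?_⟩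
    rw [Prod.smul_mk, Prod.smul_mk, Prod.mk_add_mk, Prod.mk.injEq]
    constructor
    · simp only [smul_eq_mul]; ring
    · simpa [smul_eq_mul] using lam_combo h y

lemma triCorner_comm {u v : ℝ × ℝ} (h : u.2 ≠ v.2) : triCorner u v = triCorner v u := by
  unfold triCorner
  rcases h.lt_or_gt with h1 | h1
  · rw [if_pos h1, if_neg (not_lt.2 h1.le)]
  · rw [if_neg (not_lt.2 h1.le), if_pos h1]

lemma triDelta_comm (u v : ℝ × ℝ) : triDelta u v = triDelta v u := by
  unfold triDelta
  by_cases h : u.1 = v.1 ∨ u.2 = v.2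
  · rw [if_pos h, if_pos (by tauto)]
  · have h' : ¬(v.1 = u.1 ∨ v.2 = u.2) := by
      push_neg at h ⊢; exact ⟨h.1.symm, h.2.symm⟩
    push_neg at h
    rw [if_neg (by push_neg; exact ⟨h.1, h.2⟩), if_neg h', triCorner_comm h.2,
      Set.insert_comm]

lemma mem_triDelta_aux {u v z : ℝ × ℝ} (hx : u.1 ≠ v.1) (hy : u.2 < v.2)
    {t : ℝ} (ht0 : 0 < t) (ht1 : t < 1)
    (hz1 : z.1 = t * u.1 + (1 - t) * v.1)
    (hz2 : t * u.2 + (1 - t) * v.2 < z.2)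
    (hz3 : z.2 < v.2) :
    z ∈ triDelta u v := by
  have hyne : u.2 ≠ v.2 := hy.ne
  have hcond : ¬(u.1 = v.1 ∨ u.2 = v.2) := by push_neg; exact ⟨hx, hyne⟩
  rw [triDelta, if_neg hcond]
  have hcorner : triCorner u v = (u.1, v.2) := if_pos hy
  rw [hcorner]
  have hvu2 : (0:ℝ) < v.2 - u.2 := by linarith
  have hvu1 : v.1 - u.1 ≠ 0 := sub_ne_zero.2 (Ne.symm hx)
  set A := {w : ℝ × ℝ | 0 < (v.2 - w.2) / (v.2 - u.2)} with hA
  set B := {w : ℝ × ℝ | 0 < (w.1 - u.1) / (v.1 - u.1)} with hB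
  set C := {w : ℝ × ℝ | 0 < 1 - (v.2 - w.2) / (v.2 - u.2) - (w.1 - u.1) / (v.1 - u.1)} with hC
  have hopen : IsOpen (A ∩ B ∩ C) := by
    apply IsOpen.inter
    apply IsOpen.inter
    · exact isOpen_lt continuous_const (by fun_prop)
    · exact isOpen_lt continuous_const (by fun_prop)
    · exact isOpen_lt continuous_const (by fun_prop)
  have hsub : A ∩ B ∩ C ⊆ convexHull ℝ {u, v, (u.1, v.2)} := by
    rintro w ⟨⟨hw1, hw2⟩, hw3⟩
    rw [hA, Set.mem_setOf_eq] at hw1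
    rw [hB, Set.mem_setOf_eq] at hw2
    rw [hC, Set.mem_setOf_eq] at hw3
    set α := (v.2 - w.2) / (v.2 - u.2) with hα
    set β := (w.1 - u.1) / (v.1 - u.1) with hβ
    set γ := 1 - α - β with hγ
    have hγ0 : 0 < γ := hw3
    set S : Set (ℝ × ℝ) := {u, v, (u.1, v.2)} with hS
    have hcv : Convex ℝ (convexHull ℝ S) := convex_convexHull ℝ S
    have hu : u ∈ convexHull ℝ S := subset_convexHull ℝ S (by simp [hS])
    have hv : v ∈ convexHull ℝ S := subset_convexHull ℝ S (by simp [hS])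
    have hcm : ((u.1, v.2) : ℝ × ℝ) ∈ convexHull ℝ S := subset_convexHull ℝ S (by simp [hS])
    have hβγ : 0 < β + γ := by linarith
    have hm : (β / (β + γ)) • v + (γ / (β + γ)) • ((u.1, v.2) : ℝ × ℝ) ∈ convexHull ℝ S :=
      hcv hv hcm (by positivity) (by positivity) (by field_simp)
    have key : α • u + (β + γ) • ((β / (β + γ)) • v + (γ / (β + γ)) • ((u.1, v.2) : ℝ × ℝ)) = w := by
      have e1 : (β + γ) • ((β / (β + γ)) • v + (γ / (β + γ)) • ((u.1, v.2) : ℝ × ℝ))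
          = β • v + γ • ((u.1, v.2) : ℝ × ℝ) := by
        rw [smul_add, smul_smul, smul_smul, mul_div_cancel₀ _ (ne_of_gt hβγ),
          mul_div_cancel₀ _ (ne_of_gt hβγ)]
      rw [e1]
      have hwx : β * (v.1 - u.1) = w.1 - u.1 := by
        rw [hβ]; field_simp
      have hwy : α * (v.2 - u.2) = v.2 - w.2 := by
        rw [hα]; field_simp
      apply Prod.ext
      · simp only [Prod.fst_add, Prod.smul_fst, smul_eq_mul]
        have : α * u.1 + (β * v.1 + γ * u.1) = u.1 + β * (v.1 - u.1) + (α + β + γ - 1) * u.1 := by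
          ring
        rw [this, hwx, hγ]; ring
      · simp only [Prod.snd_add, Prod.smul_snd, smul_eq_mul]
        have : α * u.2 + (β * v.2 + γ * v.2) = v.2 - α * (v.2 - u.2) + (α + β + γ - 1) * v.2 := by
          ring
        rw [this, hwy, hγ]; ring
    have hfin := hcv hu hm (le_of_lt hw1) (le_of_lt hβγ) (by rw [hγ]; ring)
    rwa [key] at hfin
  have hzU : z ∈ A ∩ B ∩ C := by
    have hβz : (z.1 - u.1) / (v.1 - u.1) = 1 - t := by
      rw [hz1]; field_simp; ring
    refine ⟨⟨?_, ?_⟩, ?_⟩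
    · rw [hA, Set.mem_setOf_eq]
      exact div_pos (by linarith) hvu2
    · rw [hB, Set.mem_setOf_eq, hβz]; linarith
    · rw [hC, Set.mem_setOf_eq, hβz]
      have : (v.2 - z.2) / (v.2 - u.2) < t := by
        rw [div_lt_iff₀ hvu2]; nlinarith
      linarith
  exact interior_maximal hsub hopen hzU

lemma mem_triDelta {u v z : ℝ × ℝ} (hx : u.1 ≠ v.1) (hy : u.2 ≠ v.2)
    {t : ℝ} (ht0 : 0 < t) (ht1 : t < 1)
    (hz1 : z.1 = t * u.1 + (1 - t) * v.1)
    (hz2 : t * u.2 + (1 - t) * v.2 < z.2)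
    (hz3 : z.2 < max u.2 v.2) :
    z ∈ triDelta u v := by
  rcases hy.lt_or_gt with h | h
  · exact mem_triDelta_aux hx h ht0 ht1 hz1 hz2 (by rwa [max_eq_right h.le] at hz3)
  · rw [triDelta_comm]
    have h10 : (0:ℝ) < 1 - t := by linarith
    have h11 : 1 - t < 1 := by linarith
    exact mem_triDelta_aux (Ne.symm hx) h h10 h11
      (by rw [hz1]; ring_nf)
      (by rw [show (1 - t) * v.2 + (1 - (1 - t)) * u.2 = t * u.2 + (1 - t) * v.2 by ring]; exact hz2)
      (by rwa [max_eq_left h.le] at hz3)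

lemma chord_pull {f : ℝ → ℝ}
    (hconv : ∀ t : ℝ, 0 < t → t < 1 → ∀ a b : ℝ, a ≠ b →
      f (t * a + (1 - t) * b) < t * f a + (1 - t) * f b)
    (hmono : StrictMono f)
    (A B W : ℝ × ℝ) {s : ℝ} (hs0 : 0 ≤ s) (hs1 : s ≤ 1)
    (h1 : W.1 = s * A.1 + (1 - s) * B.1)
    (h2 : f W.2 = s * f A.2 + (1 - s) * f B.2) :
    W = A ∨ W = B ∨ W ∈ segment ℝ A B ∨ W ∈ triDelta A B := by
  rcases eq_or_lt_of_le hs0 with h | hs0'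
  · right; left
    have hy : W.2 = B.2 := hmono.injective (by rw [h2, ← h]; ring)
    have hx : W.1 = B.1 := by rw [h1, ← h]; ring
    exact Prod.ext hx hy
  rcases eq_or_lt_of_le hs1 with h | hs1'
  · left
    have hy : W.2 = A.2 := hmono.injective (by rw [h2, h]; ring)
    have hx : W.1 = A.1 := by rw [h1, h]; ring
    exact Prod.ext hx hy
  by_cases hyAB : A.2 = B.2
  · right; right; left
    have hW2 : W.2 = s * A.2 + (1 - s) * B.2 := by
      have he : f W.2 = f A.2 := by rw [h2, hyAB]; ring
      rw [hmono.injective he, hyAB]; ring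
    have hWc : W = s • A + (1 - s) • B := by
      rw [combo_pair]; exact Prod.ext h1 hW2
    rw [hWc]; exact param_seg hs0 hs1 A B
  · have hfAB : f A.2 ≠ f B.2 := fun h => hyAB (hmono.injective h)
    have hWgt : s * A.2 + (1 - s) * B.2 < W.2 := by
      have := hconv s hs0' hs1' A.2 B.2 hyAB
      rw [← h2] at this
      exact hmono.lt_iff_lt.1 this
    have hWlt : W.2 < max A.2 B.2 := by
      have : f W.2 < f (max A.2 B.2) := by
        rw [hmono.monotone.map_max, h2]
        exact combo_lt_max hs0' hs1' hfAB
      exact hmono.lt_iff_lt.1 this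
    by_cases hxAB : A.1 = B.1
    · right; right; left
      have hW1 : W.1 = A.1 := by rw [h1, hxAB]; ring
      have hWmin : min A.2 B.2 ≤ W.2 := (min_lt_combo hs0' hs1' hyAB).le.trans hWgt.le
      have hmem := vert_mem (c := A.1) hWmin hWlt.le
      have eA : ((A.1, A.2) : ℝ × ℝ) = A := rfl
      have eB : ((A.1, B.2) : ℝ × ℝ) = B := Prod.ext hxAB rfl
      rw [eA, eB] at hmem
      have eW : W = (A.1, W.2) := Prod.ext hW1 rfl
      rwa [← eW] at hmem
    · right; right; right
      exact mem_triDelta hxAB hyAB hs0' hs1' h1 hWgt hWlt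

lemma core_mixed {f : ℝ → ℝ}
    (hconv : ∀ t : ℝ, 0 < t → t < 1 → ∀ a b : ℝ, a ≠ b →
      f (t * a + (1 - t) * b) < t * f a + (1 - t) * f b)
    (hmono : StrictMono f)
    (c b1 b2 a3 b3 a4 b4 : ℝ)
    (hx34 : a3 ≠ a4) (hb12 : b1 ≠ b2)
    (s t : ℝ) (hs0 : 0 ≤ s) (hs1 : s ≤ 1) (ht0 : 0 < t) (ht1 : t < 1)
    (hxx : c = t * a3 + (1 - t) * a4)
    (hyy : s * f b1 + (1 - s) * f b2 = t * f b3 + (1 - t) * f b4)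
    (hD1 : ((c, b1) : ℝ × ℝ) ∉ triDelta (a3, b3) (a4, b4))
    (hD2 : ((c, b2) : ℝ × ℝ) ∉ triDelta (a3, b3) (a4, b4))
    (Hend : ∀ σ τ : ℝ, 0 ≤ σ → σ ≤ 1 → 0 ≤ τ → τ ≤ 1 →
      σ * c + (1 - σ) * c = τ * a3 + (1 - τ) * a4 →
      σ * b1 + (1 - σ) * b2 = τ * b3 + (1 - τ) * b4 →
      (σ = 0 ∨ σ = 1) ∧ (τ = 0 ∨ τ = 1)) : False := by
  set Y := s * f b1 + (1 - s) * f b2 with hY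
  have hYlb : f (min b1 b2) ≤ Y := by
    rw [hmono.monotone.map_min]
    exact min_le_combo hs0 hs1 (f b1) (f b2)
  have hYub : Y ≤ f (max b1 b2) := by
    rw [hmono.monotone.map_max]
    exact combo_le_max hs0 hs1 (f b1) (f b2)
  by_cases hb34 : b3 = b4
  · have hYf : Y = f b3 := by rw [hyy, hb34]; ring
    have hl1 : min b1 b2 ≤ b3 := hmono.le_iff_le.1 (by rw [← hYf]; exact hYlb)
    have hl2 : b3 ≤ max b1 b2 := hmono.le_iff_le.1 (by rw [← hYf]; exact hYub)
    obtain ⟨hσ0, hσ1⟩ := lam_mem hb12 hl1 hl2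
    obtain ⟨_, hτ⟩ := Hend (lam b1 b2 b3) t hσ0 hσ1 ht0.le ht1.le
      (by rw [show lam b1 b2 b3 * c + (1 - lam b1 b2 b3) * c = c by ring]; exact hxx)
      (by rw [lam_combo hb12 b3, hb34]; ring)
    rcases hτ with h | h <;> linarith
  · have hwlt : f (t * b3 + (1 - t) * b4) < Y := by
      rw [hyy]; exact hconv t ht0 ht1 b3 b4 hb34
    by_cases hcmp : min b1 b2 ≤ t * b3 + (1 - t) * b4
    · have hub : t * b3 + (1 - t) * b4 ≤ max b1 b2 :=
        (hmono.lt_iff_lt.1 (lt_of_lt_of_le hwlt hYub)).le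
      obtain ⟨hσ0, hσ1⟩ := lam_mem hb12 hcmp hub
      obtain ⟨_, hτ⟩ := Hend (lam b1 b2 (t * b3 + (1 - t) * b4)) t hσ0 hσ1 ht0.le ht1.le
        (by rw [show lam b1 b2 (t * b3 + (1 - t) * b4) * c
              + (1 - lam b1 b2 (t * b3 + (1 - t) * b4)) * c = c by ring]; exact hxx)
        (lam_combo hb12 _)
      rcases hτ with h | h <;> linarith
    · push_neg at hcmp
      have hf34 : f b3 ≠ f b4 := fun h => hb34 (hmono.injective h)
      have hmaxlt : min b1 b2 < max b3 b4 := by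
        have hYlt : Y < f (max b3 b4) := by
          rw [hmono.monotone.map_max, hyy]
          exact combo_lt_max ht0 ht1 hf34
        exact hmono.lt_iff_lt.1 (lt_of_le_of_lt hYlb hYlt)
      have hmem : ((c, min b1 b2) : ℝ × ℝ) ∈ triDelta (a3, b3) (a4, b4) :=
        mem_triDelta hx34 hb34 ht0 ht1 hxx hcmp hmaxlt
      rcases min_cases b1 b2 with ⟨he, _⟩ | ⟨he, _⟩
      · rw [he] at hmem; exact hD1 hmem
      · rw [he] at hmem; exact hD2 hmem

noncomputable def chord (a b c d x : ℝ) : ℝ := lam a b x * c + (1 - lam a b x) * d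

lemma chord_left {a b : ℝ} (h : a ≠ b) (c d : ℝ) : chord a b c d a = c := by
  unfold chord; rw [lam_self h]; ring

lemma chord_right (a b c d : ℝ) : chord a b c d b = d := by
  unfold chord; rw [lam_other]; ring

lemma chord_of_combo {a b : ℝ} (h : a ≠ b) (c d s : ℝ) :
    chord a b c d (s * a + (1 - s) * b) = s * c + (1 - s) * d := by
  unfold chord; rw [lam_of_combo h]

lemma chord_affine {a b : ℝ} (h : a ≠ b) (c d p q μ : ℝ) :
    chord a b c d ((1 - μ) * p + μ * q)
      = (1 - μ) * chord a b c d p + μ * chord a b c d q := by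
  unfold chord; rw [lam_affine h]; ring

lemma chord_le_max {a b x : ℝ} (h : a ≠ b) (hx1 : min a b ≤ x) (hx2 : x ≤ max a b)
    (c d : ℝ) : chord a b c d x ≤ max c d := by
  obtain ⟨h0, h1⟩ := lam_mem h hx1 hx2
  exact combo_le_max h0 h1 c d

lemma chord_convex {f : ℝ → ℝ}
    (hconv : ∀ t : ℝ, 0 < t → t < 1 → ∀ a b : ℝ, a ≠ b →
      f (t * a + (1 - t) * b) < t * f a + (1 - t) * f b)
    {a b x : ℝ} (h : a ≠ b) (hx1 : min a b ≤ x) (hx2 : x ≤ max a b) (c d : ℝ) :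
    f (chord a b c d x) ≤ chord a b (f c) (f d) x := by
  obtain ⟨h0, h1⟩ := lam_mem h hx1 hx2
  exact fcombo_le hconv h0 h1 c d

set_option maxHeartbeats 1600000 in
lemma core_nonvert {f : ℝ → ℝ}
    (hconv : ∀ t : ℝ, 0 < t → t < 1 → ∀ a b : ℝ, a ≠ b →
      f (t * a + (1 - t) * b) < t * f a + (1 - t) * f b)
    (hmono : StrictMono f)
    (a1 b1 a2 b2 a3 b3 a4 b4 : ℝ)
    (hx12 : a1 ≠ a2) (hx34 : a3 ≠ a4)
    (s t : ℝ) (hs0 : 0 < s) (hs1 : s < 1) (ht0 : 0 < t) (ht1 : t < 1)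
    (hxx : s * a1 + (1 - s) * a2 = t * a3 + (1 - t) * a4)
    (hyy : s * f b1 + (1 - s) * f b2 = t * f b3 + (1 - t) * f b4)
    (hor : t * b3 + (1 - t) * b4 < s * b1 + (1 - s) * b2)
    (hD1 : ((a1, b1) : ℝ × ℝ) ∉ triDelta (a3, b3) (a4, b4))
    (hD2 : ((a2, b2) : ℝ × ℝ) ∉ triDelta (a3, b3) (a4, b4))
    (Hend : ∀ σ τ : ℝ, 0 ≤ σ → σ ≤ 1 → 0 ≤ τ → τ ≤ 1 →
      σ * a1 + (1 - σ) * a2 = τ * a3 + (1 - τ) * a4 →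
      σ * b1 + (1 - σ) * b2 = τ * b3 + (1 - τ) * b4 →
      (σ = 0 ∨ σ = 1) ∧ (τ = 0 ∨ τ = 1))
    (Hq1 : ∀ τ : ℝ, 0 ≤ τ → τ ≤ 1 → a1 = τ * a3 + (1 - τ) * a4 →
      f b1 = τ * f b3 + (1 - τ) * f b4 → (a1 = a3 ∧ b1 = b3) ∨ (a1 = a4 ∧ b1 = b4))
    (Hq2 : ∀ τ : ℝ, 0 ≤ τ → τ ≤ 1 → a2 = τ * a3 + (1 - τ) * a4 →
      f b2 = τ * f b3 + (1 - τ) * f b4 → (a2 = a3 ∧ b2 = b3) ∨ (a2 = a4 ∧ b2 = b4))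
    (Hq3 : ∀ σ : ℝ, 0 ≤ σ → σ ≤ 1 → a3 = σ * a1 + (1 - σ) * a2 →
      f b3 = σ * f b1 + (1 - σ) * f b2 → (a3 = a1 ∧ b3 = b1) ∨ (a3 = a2 ∧ b3 = b2))
    (Hq4 : ∀ σ : ℝ, 0 ≤ σ → σ ≤ 1 → a4 = σ * a1 + (1 - σ) * a2 →
      f b4 = σ * f b1 + (1 - σ) * f b2 → (a4 = a1 ∧ b4 = b1) ∨ (a4 = a2 ∧ b4 = b2))
    (Hne1 : ¬(a1 = a3 ∧ b1 = b3 ∧ a2 = a4 ∧ b2 = b4))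
    (Hne2 : ¬(a1 = a4 ∧ b1 = b4 ∧ a2 = a3 ∧ b2 = b3)) :
    False := by
  have hlam12 : ∀ x : ℝ, lam a1 a2 x * a1 + (1 - lam a1 a2 x) * a2 = x :=
    fun x => lam_combo hx12 x
  have hlam34 : ∀ x : ℝ, lam a3 a4 x * a3 + (1 - lam a3 a4 x) * a4 = x :=
    fun x => lam_combo hx34 x
  set x0 := s * a1 + (1 - s) * a2 with hx0def
  set l := max (min a1 a2) (min a3 a4) with hldef
  set r := min (max a1 a2) (max a3 a4) with hrdef
  have hlx0 : l < x0 := by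
    apply max_lt
    · exact min_lt_combo hs0 hs1 hx12
    · rw [hxx]; exact min_lt_combo ht0 ht1 hx34
  have hx0r : x0 < r := by
    apply lt_min
    · exact combo_lt_max hs0 hs1 hx12
    · rw [hxx]; exact combo_lt_max ht0 ht1 hx34
  have hlr : l < r := hlx0.trans hx0r
  have hrange12 : ∀ x, l ≤ x → x ≤ r → min a1 a2 ≤ x ∧ x ≤ max a1 a2 := fun x hx1 hx2 =>
    ⟨le_trans (le_max_left _ _) hx1, le_trans hx2 (min_le_left _ _)⟩
  have hrange34 : ∀ x, l ≤ x → x ≤ r → min a3 a4 ≤ x ∧ x ≤ max a3 a4 := fun x hx1 hx2 =>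
    ⟨le_trans (le_max_right _ _) hx1, le_trans hx2 (min_le_right _ _)⟩
  -- values at x0
  have hL1x0 : chord a1 a2 (f b1) (f b2) x0 = s * f b1 + (1 - s) * f b2 :=
    chord_of_combo hx12 (f b1) (f b2) s
  have hL2x0 : chord a3 a4 (f b3) (f b4) x0 = t * f b3 + (1 - t) * f b4 := by
    rw [hxx]; exact chord_of_combo hx34 (f b3) (f b4) t
  have hl1x0 : chord a1 a2 b1 b2 x0 = s * b1 + (1 - s) * b2 := chord_of_combo hx12 b1 b2 s
  have hl2x0 : chord a3 a4 b3 b4 x0 = t * b3 + (1 - t) * b4 := by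
    rw [hxx]; exact chord_of_combo hx34 b3 b4 t
  have hg0 : chord a1 a2 (f b1) (f b2) x0 = chord a3 a4 (f b3) (f b4) x0 := by
    rw [hL1x0, hL2x0]; exact hyy
  have hh0 : chord a3 a4 b3 b4 x0 < chord a1 a2 b1 b2 x0 := by
    rw [hl1x0, hl2x0]; exact hor
  -- no interior crossing of the original segments
  have hnz : ∀ x, l < x → x < r → chord a1 a2 b1 b2 x ≠ chord a3 a4 b3 b4 x := by
    intro x hx1 hx2 heq
    obtain ⟨hσ0, hσ1⟩ := lam_mem_strict hx12
      (lt_of_le_of_lt (le_max_left _ _) hx1) (lt_of_lt_of_le hx2 (min_le_left _ _))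
    obtain ⟨hτ0, hτ1⟩ := lam_mem_strict hx34
      (lt_of_le_of_lt (le_max_right _ _) hx1) (lt_of_lt_of_le hx2 (min_le_right _ _))
    obtain ⟨hc, _⟩ := Hend (lam a1 a2 x) (lam a3 a4 x) hσ0.le hσ1.le hτ0.le hτ1.le
      (by rw [hlam12, hlam34]) heq
    rcases hc with hc | hc <;> rw [hc] at hσ0 hσ1 <;> linarith
  -- the lower chord stays below the upper chord on [l, r]
  have hge : ∀ x, l ≤ x → x ≤ r → chord a3 a4 b3 b4 x ≤ chord a1 a2 b1 b2 x := by
    intro x hx1 hx2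
    by_contra hlt
    push_neg at hlt
    set H := fun y : ℝ => chord a1 a2 b1 b2 y - chord a3 a4 b3 b4 y with hHdef
    have hHx : H x < 0 := by simp only [hHdef]; linarith
    have hH0 : 0 < H x0 := by simp only [hHdef]; linarith
    have hd : 0 < H x0 - H x := by linarith
    set μ := H x0 / (H x0 - H x) with hμ
    have hμ0 : 0 < μ := div_pos hH0 hd
    have hμ1 : μ < 1 := by rw [hμ, div_lt_one hd]; linarith
    have hHaff : H ((1 - μ) * x0 + μ * x) = (1 - μ) * H x0 + μ * H x := by
      simp only [hHdef]
      rw [chord_affine hx12, chord_affine hx34]; ring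
    have hzero : H ((1 - μ) * x0 + μ * x) = 0 := by
      rw [hHaff, hμ]; field_simp; ring
    have hx'l : l < (1 - μ) * x0 + μ * x := by
      nlinarith [mul_pos (by linarith : (0:ℝ) < 1 - μ) (by linarith : (0:ℝ) < x0 - l),
        mul_nonneg hμ0.le (by linarith : (0:ℝ) ≤ x - l)]
    have hx'r : (1 - μ) * x0 + μ * x < r := by
      nlinarith [mul_pos (by linarith : (0:ℝ) < 1 - μ) (by linarith : (0:ℝ) < r - x0),
        mul_nonneg hμ0.le (by linarith : (0:ℝ) ≤ r - x)]
    refine hnz _ hx'l hx'r ?_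
    simp only [hHdef] at hzero
    linarith
  -- main branch: an endpoint of [l,r] where the f-chords have negative gap
  have main : ∀ xs, (xs = l ∨ xs = r) →
      chord a1 a2 (f b1) (f b2) xs < chord a3 a4 (f b3) (f b4) xs → False := by
    intro xs hxs hgneg
    have hxsl : l ≤ xs := by
      rcases hxs with hh1 | hh1
      · rw [hh1]
      · rw [hh1]; exact hlr.le
    have hxsr : xs ≤ r := by
      rcases hxs with hh1 | hh1
      · rw [hh1]; exact hlr.le
      · rw [hh1]
    obtain ⟨hr12a, hr12b⟩ := hrange12 xs hxsl hxsr
    obtain ⟨hr34a, hr34b⟩ := hrange34 xs hxsl hxsr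
    by_cases hmem34 : xs = a3 ∨ xs = a4
    · have hL2eq : chord a3 a4 (f b3) (f b4) xs = f (chord a3 a4 b3 b4 xs) := by
        rcases hmem34 with hc | hc <;> rw [hc]
        · rw [chord_left hx34, chord_left hx34]
        · rw [chord_right, chord_right]
      have hfle : f (chord a1 a2 b1 b2 xs) ≤ chord a1 a2 (f b1) (f b2) xs :=
        chord_convex hconv hx12 hr12a hr12b b1 b2
      have hflt : f (chord a1 a2 b1 b2 xs) < f (chord a3 a4 b3 b4 xs) := by
        calc f (chord a1 a2 b1 b2 xs) ≤ chord a1 a2 (f b1) (f b2) xs := hfle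
        _ < chord a3 a4 (f b3) (f b4) xs := hgneg
        _ = f (chord a3 a4 b3 b4 xs) := hL2eq
      have := hmono.lt_iff_lt.1 hflt
      linarith [hge xs hxsl hxsr]
    · push_neg at hmem34
      have hmem12 : xs = a1 ∨ xs = a2 := by
        rcases hxs with hc | hc
        · rcases max_cases (min a1 a2) (min a3 a4) with ⟨he, _⟩ | ⟨he, _⟩
          · rw [hldef] at hc; rw [he] at hc
            rcases min_cases a1 a2 with ⟨he2, _⟩ | ⟨he2, _⟩
            · left; rw [hc, he2]
            · right; rw [hc, he2]
          · exfalso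
            rw [hldef] at hc; rw [he] at hc
            rcases min_cases a3 a4 with ⟨he2, _⟩ | ⟨he2, _⟩
            · exact hmem34.1 (by rw [hc, he2])
            · exact hmem34.2 (by rw [hc, he2])
        · rcases min_cases (max a1 a2) (max a3 a4) with ⟨he, _⟩ | ⟨he, _⟩
          · rw [hrdef] at hc; rw [he] at hc
            rcases max_cases a1 a2 with ⟨he2, _⟩ | ⟨he2, _⟩
            · left; rw [hc, he2]
            · right; rw [hc, he2]
          · exfalso
            rw [hrdef] at hc; rw [he] at hc
            rcases max_cases a3 a4 with ⟨he2, _⟩ | ⟨he2, _⟩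
            · exact hmem34.1 (by rw [hc, he2])
            · exact hmem34.2 (by rw [hc, he2])
      have h34l : min a3 a4 < xs := by
        apply lt_of_le_of_ne hr34a
        rcases min_cases a3 a4 with ⟨he2, _⟩ | ⟨he2, _⟩ <;> rw [he2]
        · exact fun hcc => hmem34.1 hcc.symm
        · exact fun hcc => hmem34.2 hcc.symm
      have h34r : xs < max a3 a4 := by
        apply lt_of_le_of_ne hr34b
        rcases max_cases a3 a4 with ⟨he2, _⟩ | ⟨he2, _⟩ <;> rw [he2]
        · exact hmem34.1
        · exact hmem34.2
      obtain ⟨hτs0, hτs1⟩ := lam_mem_strict hx34 h34l h34r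
      have hL2le : chord a3 a4 (f b3) (f b4) xs ≤ max (f b3) (f b4) :=
        chord_le_max hx34 hr34a hr34b (f b3) (f b4)
      have hgeflip := hge xs hxsl hxsr
      -- unified endpoint handling
      rcases hmem12 with h12 | h12
      · -- xs = a1
        have hl1eq : chord a1 a2 b1 b2 xs = b1 := by rw [h12]; exact chord_left hx12 b1 b2
        have hL1eq : chord a1 a2 (f b1) (f b2) xs = f b1 := by
          rw [h12]; exact chord_left hx12 (f b1) (f b2)
        have hstrict : chord a3 a4 b3 b4 xs < b1 := by
          rcases lt_or_eq_of_le (hl1eq ▸ hgeflip) with hcc | hcc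
          · exact hcc
          · exfalso
            obtain ⟨_, hτc⟩ := Hend 1 (lam a3 a4 xs) zero_le_one le_rfl hτs0.le hτs1.le
              (by rw [hlam34, ← h12]; ring)
              (by rw [show (1:ℝ) * b1 + (1 - 1) * b2 = b1 by ring, ← hcc]; rfl)
            rcases hτc with hcc2 | hcc2 <;> rw [hcc2] at hτs0 hτs1 <;> linarith
        have hb1max : b1 < max b3 b4 := by
          have : f b1 < f (max b3 b4) := by
            rw [hmono.monotone.map_max]
            calc f b1 = chord a1 a2 (f b1) (f b2) xs := hL1eq.symm
            _ < chord a3 a4 (f b3) (f b4) xs := hgneg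
            _ ≤ max (f b3) (f b4) := hL2le
          exact hmono.lt_iff_lt.1 this
        have hb34 : b3 ≠ b4 := by
          intro he
          rw [he, max_self] at hb1max
          have he2 : chord a3 a4 b4 b4 xs = b4 := by unfold chord; ring
          rw [he, he2] at hstrict
          linarith
        refine hD1 (mem_triDelta hx34 hb34 hτs0 hτs1 ?_ ?_ ?_)
        · show a1 = lam a3 a4 xs * a3 + (1 - lam a3 a4 xs) * a4
          rw [hlam34, ← h12]
        · exact hstrict
        · exact hb1max
      · -- xs = a2
        have hl1eq : chord a1 a2 b1 b2 xs = b2 := by rw [h12]; exact chord_right a1 a2 b1 b2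
        have hL1eq : chord a1 a2 (f b1) (f b2) xs = f b2 := by
          rw [h12]; exact chord_right a1 a2 (f b1) (f b2)
        have hstrict : chord a3 a4 b3 b4 xs < b2 := by
          rcases lt_or_eq_of_le (hl1eq ▸ hgeflip) with hcc | hcc
          · exact hcc
          · exfalso
            obtain ⟨_, hτc⟩ := Hend 0 (lam a3 a4 xs) le_rfl zero_le_one hτs0.le hτs1.le
              (by rw [hlam34, ← h12]; ring)
              (by rw [show (0:ℝ) * b1 + (1 - 0) * b2 = b2 by ring, ← hcc]; rfl)
            rcases hτc with hcc2 | hcc2 <;> rw [hcc2] at hτs0 hτs1 <;> linarith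
        have hb1max : b2 < max b3 b4 := by
          have : f b2 < f (max b3 b4) := by
            rw [hmono.monotone.map_max]
            calc f b2 = chord a1 a2 (f b1) (f b2) xs := hL1eq.symm
            _ < chord a3 a4 (f b3) (f b4) xs := hgneg
            _ ≤ max (f b3) (f b4) := hL2le
          exact hmono.lt_iff_lt.1 this
        have hb34 : b3 ≠ b4 := by
          intro he
          rw [he, max_self] at hb1max
          have he2 : chord a3 a4 b4 b4 xs = b4 := by unfold chord; ring
          rw [he, he2] at hstrict
          linarith
        refine hD2 (mem_triDelta hx34 hb34 hτs0 hτs1 ?_ ?_ ?_)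
        · show a2 = lam a3 a4 xs * a3 + (1 - lam a3 a4 xs) * a4
          rw [hlam34, ← h12]
        · exact hstrict
        · exact hb1max
  -- coincidence extraction at an endpoint of [l, r] where the f-chords agree
  have hcoin : ∀ x, (x = l ∨ x = r) →
      chord a1 a2 (f b1) (f b2) x = chord a3 a4 (f b3) (f b4) x →
      ((a1 = a3 ∧ b1 = b3) ∧ a1 = x) ∨ ((a1 = a4 ∧ b1 = b4) ∧ a1 = x) ∨
      ((a2 = a3 ∧ b2 = b3) ∧ a2 = x) ∨ ((a2 = a4 ∧ b2 = b4) ∧ a2 = x) := by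
    intro x hxlr hgx
    have hx1 : l ≤ x := by
      rcases hxlr with hh1 | hh1
      · rw [hh1]
      · rw [hh1]; exact hlr.le
    have hx2 : x ≤ r := by
      rcases hxlr with hh1 | hh1
      · rw [hh1]; exact hlr.le
      · rw [hh1]
    obtain ⟨hr12a, hr12b⟩ := hrange12 x hx1 hx2
    obtain ⟨hr34a, hr34b⟩ := hrange34 x hx1 hx2
    obtain ⟨hσ0, hσ1⟩ := lam_mem hx12 hr12a hr12b
    obtain ⟨hτ0, hτ1⟩ := lam_mem hx34 hr34a hr34b
    have hmemx : x = a1 ∨ x = a2 ∨ x = a3 ∨ x = a4 := by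
      rcases hxlr with hc | hc
      · rw [hldef] at hc
        rcases max_cases (min a1 a2) (min a3 a4) with ⟨he, _⟩ | ⟨he, _⟩ <;> rw [he] at hc
        · rcases min_cases a1 a2 with ⟨he2, _⟩ | ⟨he2, _⟩ <;> rw [he2] at hc
          · left; exact hc
          · right; left; exact hc
        · rcases min_cases a3 a4 with ⟨he2, _⟩ | ⟨he2, _⟩ <;> rw [he2] at hc
          · right; right; left; exact hc
          · right; right; right; exact hc
      · rw [hrdef] at hc
        rcases min_cases (max a1 a2) (max a3 a4) with ⟨he, _⟩ | ⟨he, _⟩ <;> rw [he] at hc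
        · rcases max_cases a1 a2 with ⟨he2, _⟩ | ⟨he2, _⟩ <;> rw [he2] at hc
          · left; exact hc
          · right; left; exact hc
        · rcases max_cases a3 a4 with ⟨he2, _⟩ | ⟨he2, _⟩ <;> rw [he2] at hc
          · right; right; left; exact hc
          · right; right; right; exact hc
    rcases hmemx with hc | hc | hc | hc
    · rw [hc] at hgx hτ0 hτ1
      have hq := Hq1 (lam a3 a4 a1) hτ0 hτ1 (hlam34 a1).symm
        (by show f b1 = chord a3 a4 (f b3) (f b4) a1
            rw [← hgx]; exact (chord_left hx12 (f b1) (f b2)).symm)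
      rcases hq with hcc | hcc
      · exact Or.inl ⟨hcc, hc.symm⟩
      · exact Or.inr (Or.inl ⟨hcc, hc.symm⟩)
    · rw [hc] at hgx hτ0 hτ1
      have hq := Hq2 (lam a3 a4 a2) hτ0 hτ1 (hlam34 a2).symm
        (by show f b2 = chord a3 a4 (f b3) (f b4) a2
            rw [← hgx]; exact (chord_right a1 a2 (f b1) (f b2)).symm)
      rcases hq with hcc | hcc
      · exact Or.inr (Or.inr (Or.inl ⟨hcc, hc.symm⟩))
      · exact Or.inr (Or.inr (Or.inr ⟨hcc, hc.symm⟩))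
    · rw [hc] at hgx hσ0 hσ1
      have hq := Hq3 (lam a1 a2 a3) hσ0 hσ1 (hlam12 a3).symm
        (by show f b3 = chord a1 a2 (f b1) (f b2) a3
            rw [hgx]; exact (chord_left hx34 (f b3) (f b4)).symm)
      rcases hq with hcc | hcc
      · exact Or.inl ⟨⟨hcc.1.symm, hcc.2.symm⟩, hcc.1.symm.trans hc.symm⟩
      · exact Or.inr (Or.inr (Or.inl ⟨⟨hcc.1.symm, hcc.2.symm⟩, hcc.1.symm.trans hc.symm⟩))
    · rw [hc] at hgx hσ0 hσ1
      have hq := Hq4 (lam a1 a2 a4) hσ0 hσ1 (hlam12 a4).symm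
        (by show f b4 = chord a1 a2 (f b1) (f b2) a4
            rw [hgx]; exact (chord_right a3 a4 (f b3) (f b4)).symm)
      rcases hq with hcc | hcc
      · exact Or.inr (Or.inl ⟨⟨hcc.1.symm, hcc.2.symm⟩, hcc.1.symm.trans hc.symm⟩)
      · exact Or.inr (Or.inr (Or.inr ⟨⟨hcc.1.symm, hcc.2.symm⟩, hcc.1.symm.trans hc.symm⟩))
  -- final trichotomy on the gap at l
  have hGaff : ∀ p q u : ℝ,
      chord a1 a2 (f b1) (f b2) ((1 - u) * p + u * q)
        - chord a3 a4 (f b3) (f b4) ((1 - u) * p + u * q)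
      = (1 - u) * (chord a1 a2 (f b1) (f b2) p - chord a3 a4 (f b3) (f b4) p)
        + u * (chord a1 a2 (f b1) (f b2) q - chord a3 a4 (f b3) (f b4) q) := by
    intro p q u
    rw [chord_affine hx12 (f b1) (f b2) p q u, chord_affine hx34 (f b3) (f b4) p q u]
    ring
  have hx0l : x0 - l ≠ 0 := (by linarith : (0:ℝ) < x0 - l).ne'
  have hrcomb : (1 - (r - l) / (x0 - l)) * l + ((r - l) / (x0 - l)) * x0 = r := by
    have hcan : (r - l) / (x0 - l) * (x0 - l) = r - l := div_mul_cancel₀ _ hx0l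
    linear_combination hcan
  have key := hGaff l x0 ((r - l) / (x0 - l))
  rw [hrcomb] at key
  rcases lt_trichotomy
      (chord a1 a2 (f b1) (f b2) l - chord a3 a4 (f b3) (f b4) l) 0 with hGl | hGl | hGl
  · exact main l (Or.inl rfl) (by linarith)
  · have hGr : chord a1 a2 (f b1) (f b2) r - chord a3 a4 (f b3) (f b4) r = 0 := by
      rw [key, hGl]
      have : chord a1 a2 (f b1) (f b2) x0 - chord a3 a4 (f b3) (f b4) x0 = 0 := by
        rw [hg0]; ring
      rw [this]; ring
    have hc1 := hcoin l (Or.inl rfl) (by linarith)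
    have hc2 := hcoin r (Or.inr rfl) (by linarith)
    have hlner : l ≠ r := hlr.ne
    rcases hc1 with ⟨h1, e1⟩ | ⟨h1, e1⟩ | ⟨h1, e1⟩ | ⟨h1, e1⟩ <;>
      rcases hc2 with ⟨h2, e2⟩ | ⟨h2, e2⟩ | ⟨h2, e2⟩ | ⟨h2, e2⟩ <;>
      first
        | exact hlner (e1.symm.trans e2)
        | exact hx12 (h1.1.trans h2.1.symm)
        | exact hx12 (h2.1.trans h1.1.symm)
        | exact Hne1 ⟨h1.1, h1.2, h2.1, h2.2⟩
        | exact Hne1 ⟨h2.1, h2.2, h1.1, h1.2⟩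
        | exact Hne2 ⟨h1.1, h1.2, h2.1, h2.2⟩
        | exact Hne2 ⟨h2.1, h2.2, h1.1, h1.2⟩
  · have hu1 : 1 < (r - l) / (x0 - l) := by
      rw [lt_div_iff₀ (by linarith : (0:ℝ) < x0 - l)]; linarith
    have hGx0 : chord a1 a2 (f b1) (f b2) x0 - chord a3 a4 (f b3) (f b4) x0 = 0 := by
      rw [hg0]; ring
    have hGr : chord a1 a2 (f b1) (f b2) r - chord a3 a4 (f b3) (f b4) r < 0 := by
      rw [key, hGx0]
      nlinarith
    exact main r (Or.inr rfl) (by linarith)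

lemma pair_eq {x : ℝ × ℝ} {c d : ℝ} (h1 : x.1 = c) (h2 : x.2 = d) : x = (c, d) :=
  Prod.ext h1 h2

lemma seg_of_coords {A B w : ℝ × ℝ} {σ : ℝ} (h0 : 0 ≤ σ) (h1 : σ ≤ 1)
    (hx : w.1 = σ * A.1 + (1 - σ) * B.1) (hy : w.2 = σ * A.2 + (1 - σ) * B.2) :
    w ∈ segment ℝ A B := by
  have hw : w = σ • A + (1 - σ) • B := by rw [combo_pair]; exact Prod.ext hx hy
  rw [hw]; exact param_seg h0 h1 A B

lemma vert_seg {A B : ℝ × ℝ} (h : A.1 = B.1) {y : ℝ}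
    (h1 : min A.2 B.2 ≤ y) (h2 : y ≤ max A.2 B.2) :
    ((A.1, y) : ℝ × ℝ) ∈ segment ℝ A B := by
  have hm := vert_mem (c := A.1) h1 h2
  have eA : ((A.1, A.2) : ℝ × ℝ) = A := rfl
  have eB : ((A.1, B.2) : ℝ × ℝ) = B := Prod.ext h rfl
  rwa [eA, eB] at hm

lemma combo_endpoint1 {A B : ℝ × ℝ} (hAB : A ≠ B) {σ : ℝ}
    (h : σ • A + (1 - σ) • B = A) : σ = 1 := by
  by_contra hσ
  have hne : 1 - σ ≠ 0 := fun hc => hσ (by linarith [sub_eq_zero.1 hc])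
  apply hAB
  rw [combo_pair] at h
  have h1 : σ * A.1 + (1 - σ) * B.1 = A.1 := congrArg Prod.fst h
  have h2 : σ * A.2 + (1 - σ) * B.2 = A.2 := congrArg Prod.snd h
  have e1 : A.1 = B.1 := by
    rcases mul_eq_zero.1 (show (1 - σ) * (B.1 - A.1) = 0 by linarith) with hc | hc
    · exact absurd hc hne
    · linarith
  have e2 : A.2 = B.2 := by
    rcases mul_eq_zero.1 (show (1 - σ) * (B.2 - A.2) = 0 by linarith) with hc | hc
    · exact absurd hc hne
    · linarith
  exact Prod.ext e1 e2

lemma combo_endpoint0 {A B : ℝ × ℝ} (hAB : A ≠ B) {σ : ℝ}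
    (h : σ • A + (1 - σ) • B = B) : σ = 0 := by
  by_contra hσ
  apply hAB
  rw [combo_pair] at h
  have h1 : σ * A.1 + (1 - σ) * B.1 = B.1 := congrArg Prod.fst h
  have h2 : σ * A.2 + (1 - σ) * B.2 = B.2 := congrArg Prod.snd h
  have e1 : A.1 = B.1 := by
    rcases mul_eq_zero.1 (show σ * (A.1 - B.1) = 0 by linarith) with hc | hc
    · exact absurd hc hσ
    · linarith
  have e2 : A.2 = B.2 := by
    rcases mul_eq_zero.1 (show σ * (A.2 - B.2) = 0 by linarith) with hc | hc
    · exact absurd hc hσ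
    · linarith
  exact Prod.ext e1 e2

end Stmt4Aux

open Stmt4Aux in
/-- A planar liftable straight-line grid drawing remains planar after the
transformation (x, y) ↦ (x, f y) by a strictly convex, strictly increasing function f. -/
theorem stmt_4 (V : Type*) [Fintype V] (G : SimpleGraph V)
    (p : V → ℤ × ℤ) (hp : Function.Injective p)
    (P : V → ℝ × ℝ) (hP : ∀ v : V, P v = (((p v).1 : ℝ), ((p v).2 : ℝ)))
    -- planarity: no vertex on the open part of an edge
    (hvertex : ∀ u v : V, G.Adj u v → ∀ w : V, w ≠ u → w ≠ v →
      P w ∉ segment ℝ (P u) (P v))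
    -- planarity: distinct edges sharing no vertex have disjoint segments,
    -- and edges sharing exactly one vertex meet exactly in its image
    (hdisj : ∀ u v a b : V, G.Adj u v → G.Adj a b → ({u, v} : Set V) ≠ {a, b} →
      (({u, v} : Set V) ∩ {a, b} = ∅ →
        segment ℝ (P u) (P v) ∩ segment ℝ (P a) (P b) = ∅) ∧
      (∀ z : V, ({u, v} : Set V) ∩ {a, b} = {z} →
        segment ℝ (P u) (P v) ∩ segment ℝ (P a) (P b) = {P z}))
    -- liftability
    (hlift : ∀ u v : V, G.Adj u v → ∀ w : V, P w ∉ triDelta (P u) (P v))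
    (f : ℝ → ℝ)
    (hconv : ∀ t : ℝ, 0 < t → t < 1 → ∀ a b : ℝ, a ≠ b →
      f (t * a + (1 - t) * b) < t * f a + (1 - t) * f b)
    (hmono : StrictMono f)
    (q : V → ℝ × ℝ) (hq : ∀ v : V, q v = (((p v).1 : ℝ), f ((p v).2 : ℝ))) :
    (∀ u v : V, G.Adj u v → ∀ w : V, w ≠ u → w ≠ v →
      q w ∉ segment ℝ (q u) (q v)) ∧
    (∀ u v a b : V, G.Adj u v → G.Adj a b → ({u, v} : Set V) ≠ {a, b} →
      (({u, v} : Set V) ∩ {a, b} = ∅ →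
        segment ℝ (q u) (q v) ∩ segment ℝ (q a) (q b) = ∅) ∧
      (∀ z : V, ({u, v} : Set V) ∩ {a, b} = {z} →
        segment ℝ (q u) (q v) ∩ segment ℝ (q a) (q b) = {q z})) := by
  have hPinj : Function.Injective P := by
    intro x y hxy
    apply hp
    rw [hP x, hP y, Prod.mk.injEq] at hxy
    exact Prod.ext (by exact_mod_cast hxy.1) (by exact_mod_cast hxy.2)
  have hqP : ∀ v : V, q v = ((P v).1, f ((P v).2)) := by
    intro v; rw [hq v, hP v]
  have hchord : ∀ a b w : V, G.Adj a b → q w ∈ segment ℝ (q a) (q b) → w = a ∨ w = b := by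
    intro a b w hab hmem
    obtain ⟨s, hs0, hs1, hseq⟩ := seg_param hmem
    have h1 : (P w).1 = s * (P a).1 + (1 - s) * (P b).1 := by
      have := congrArg Prod.fst hseq
      rw [hqP w, hqP a, hqP b, combo_pair] at this
      exact this
    have h2 : f (P w).2 = s * f (P a).2 + (1 - s) * f (P b).2 := by
      have := congrArg Prod.snd hseq
      rw [hqP w, hqP a, hqP b, combo_pair] at this
      exact this
    rcases chord_pull hconv hmono (P a) (P b) (P w) hs0 hs1 h1 h2 with h | h | h | h
    · exact Or.inl (hPinj h)
    · exact Or.inr (hPinj h)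
    · by_cases hwa : w = a
      · exact Or.inl hwa
      by_cases hwb : w = b
      · exact Or.inr hwb
      exact absurd h (hvertex a b hab w hwa hwb)
    · exact absurd h (hlift a b hab w)
  constructor
  · intro u v huv w hwu hwv hmem
    rcases hchord u v w huv hmem with h | h
    · exact hwu h
    · exact hwv h
  · intro u v a b huv hab hne
    obtain ⟨hd1, hd2⟩ := hdisj u v a b huv hab hne
    have huvne : P u ≠ P v := fun h => huv.ne (hPinj h)
    have habne : P a ≠ P b := fun h => hab.ne (hPinj h)
    -- vertex coincidence consequences (shared by both parts)
    have Hq13 : ∀ τ : ℝ, 0 ≤ τ → τ ≤ 1 → (P u).1 = τ * (P a).1 + (1 - τ) * (P b).1 →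
        f (P u).2 = τ * f (P a).2 + (1 - τ) * f (P b).2 →
        ((P u).1 = (P a).1 ∧ (P u).2 = (P a).2) ∨ ((P u).1 = (P b).1 ∧ (P u).2 = (P b).2) := by
      intro τ h0 h1 hxe hye
      have hm : q u ∈ segment ℝ (q a) (q b) := by
        apply seg_of_coords h0 h1
        · rw [hqP u, hqP a, hqP b]; exact hxe
        · rw [hqP u, hqP a, hqP b]; exact hye
      rcases hchord a b u hab hm with h | h
      · left; rw [h]; exact ⟨rfl, rfl⟩
      · right; rw [h]; exact ⟨rfl, rfl⟩
    have Hq23 : ∀ τ : ℝ, 0 ≤ τ → τ ≤ 1 → (P v).1 = τ * (P a).1 + (1 - τ) * (P b).1 →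
        f (P v).2 = τ * f (P a).2 + (1 - τ) * f (P b).2 →
        ((P v).1 = (P a).1 ∧ (P v).2 = (P a).2) ∨ ((P v).1 = (P b).1 ∧ (P v).2 = (P b).2) := by
      intro τ h0 h1 hxe hye
      have hm : q v ∈ segment ℝ (q a) (q b) := by
        apply seg_of_coords h0 h1
        · rw [hqP v, hqP a, hqP b]; exact hxe
        · rw [hqP v, hqP a, hqP b]; exact hye
      rcases hchord a b v hab hm with h | h
      · left; rw [h]; exact ⟨rfl, rfl⟩
      · right; rw [h]; exact ⟨rfl, rfl⟩
    have Hq31 : ∀ σ : ℝ, 0 ≤ σ → σ ≤ 1 → (P a).1 = σ * (P u).1 + (1 - σ) * (P v).1 →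
        f (P a).2 = σ * f (P u).2 + (1 - σ) * f (P v).2 →
        ((P a).1 = (P u).1 ∧ (P a).2 = (P u).2) ∨ ((P a).1 = (P v).1 ∧ (P a).2 = (P v).2) := by
      intro σ h0 h1 hxe hye
      have hm : q a ∈ segment ℝ (q u) (q v) := by
        apply seg_of_coords h0 h1
        · rw [hqP a, hqP u, hqP v]; exact hxe
        · rw [hqP a, hqP u, hqP v]; exact hye
      rcases hchord u v a huv hm with h | h
      · left; rw [h]; exact ⟨rfl, rfl⟩
      · right; rw [h]; exact ⟨rfl, rfl⟩
    have Hq41 : ∀ σ : ℝ, 0 ≤ σ → σ ≤ 1 → (P b).1 = σ * (P u).1 + (1 - σ) * (P v).1 →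
        f (P b).2 = σ * f (P u).2 + (1 - σ) * f (P v).2 →
        ((P b).1 = (P u).1 ∧ (P b).2 = (P u).2) ∨ ((P b).1 = (P v).1 ∧ (P b).2 = (P v).2) := by
      intro σ h0 h1 hxe hye
      have hm : q b ∈ segment ℝ (q u) (q v) := by
        apply seg_of_coords h0 h1
        · rw [hqP b, hqP u, hqP v]; exact hxe
        · rw [hqP b, hqP u, hqP v]; exact hye
      rcases hchord u v b huv hm with h | h
      · left; rw [h]; exact ⟨rfl, rfl⟩
      · right; rw [h]; exact ⟨rfl, rfl⟩
    have Hne1 : ¬((P u).1 = (P a).1 ∧ (P u).2 = (P a).2 ∧ (P v).1 = (P b).1 ∧ (P v).2 = (P b).2) := by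
      rintro ⟨e1, e2, e3, e4⟩
      apply hne
      rw [hPinj (Prod.ext e1 e2), hPinj (Prod.ext e3 e4)]
    have Hne2 : ¬((P u).1 = (P b).1 ∧ (P u).2 = (P b).2 ∧ (P v).1 = (P a).1 ∧ (P v).2 = (P a).2) := by
      rintro ⟨e1, e2, e3, e4⟩
      apply hne
      rw [hPinj (Prod.ext e1 e2), hPinj (Prod.ext e3 e4)]
      exact Set.pair_comm b a
    constructor
    · -- disjoint vertex sets
      intro hvd
      have hSP := hd1 hvd
      have hmemV : ∀ w : V, w ∈ ({u, v} : Set V) → w ∈ ({a, b} : Set V) → False := by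
        intro w h1 h2
        have hw : w ∈ ({u, v} : Set V) ∩ {a, b} := ⟨h1, h2⟩
        rw [hvd] at hw
        exact hw
      have HendA : ∀ σ τ : ℝ, 0 ≤ σ → σ ≤ 1 → 0 ≤ τ → τ ≤ 1 →
          σ * (P u).1 + (1 - σ) * (P v).1 = τ * (P a).1 + (1 - τ) * (P b).1 →
          σ * (P u).2 + (1 - σ) * (P v).2 = τ * (P a).2 + (1 - τ) * (P b).2 →
          (σ = 0 ∨ σ = 1) ∧ (τ = 0 ∨ τ = 1) := by
        intro σ τ h0 h1 h2 h3 hxe hye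
        exfalso
        have hm1 : σ • P u + (1 - σ) • P v ∈ segment ℝ (P u) (P v) := param_seg h0 h1 _ _
        have heq : σ • P u + (1 - σ) • P v = τ • P a + (1 - τ) • P b := by
          rw [combo_pair, combo_pair]; exact Prod.ext hxe hye
        have hm2 : σ • P u + (1 - σ) • P v ∈ segment ℝ (P a) (P b) := by
          rw [heq]; exact param_seg h2 h3 _ _
        have hmm : σ • P u + (1 - σ) • P v ∈
            segment ℝ (P u) (P v) ∩ segment ℝ (P a) (P b) := ⟨hm1, hm2⟩
        rw [hSP] at hmm
        exact hmm
      apply Set.eq_empty_iff_forall_notMem.2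
      intro ζ hζ
      obtain ⟨hζ1, hζ2⟩ := hζ
      obtain ⟨s, hs0, hs1, hseq1⟩ := seg_param hζ1
      obtain ⟨t, ht0, ht1, hseq2⟩ := seg_param hζ2
      have hx1 : ζ.1 = s * (P u).1 + (1 - s) * (P v).1 := by
        have hh := congrArg Prod.fst hseq1
        rw [hqP u, hqP v, combo_pair] at hh; exact hh
      have hy1 : ζ.2 = s * f (P u).2 + (1 - s) * f (P v).2 := by
        have hh := congrArg Prod.snd hseq1
        rw [hqP u, hqP v, combo_pair] at hh; exact hh
      have hx2 : ζ.1 = t * (P a).1 + (1 - t) * (P b).1 := by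
        have hh := congrArg Prod.fst hseq2
        rw [hqP a, hqP b, combo_pair] at hh; exact hh
      have hy2 : ζ.2 = t * f (P a).2 + (1 - t) * f (P b).2 := by
        have hh := congrArg Prod.snd hseq2
        rw [hqP a, hqP b, combo_pair] at hh; exact hh
      rcases eq_or_lt_of_le hs0 with hc | hs0'
      · have hζv : ζ = q v := by rw [hseq1, ← hc]; simp
        rcases hchord a b v hab (by rw [← hζv]; exact hζ2) with h | h
        · exact hmemV v (by simp) (by simp [h])
        · exact hmemV v (by simp) (by simp [h])
      rcases eq_or_lt_of_le hs1 with hc | hs1'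
      · have hζu : ζ = q u := by rw [hseq1, hc]; simp
        rcases hchord a b u hab (by rw [← hζu]; exact hζ2) with h | h
        · exact hmemV u (by simp) (by simp [h])
        · exact hmemV u (by simp) (by simp [h])
      rcases eq_or_lt_of_le ht0 with hc | ht0'
      · have hζb : ζ = q b := by rw [hseq2, ← hc]; simp
        rcases hchord u v b huv (by rw [← hζb]; exact hζ1) with h | h
        · exact hmemV b (by simp [h]) (by simp)
        · exact hmemV b (by simp [h]) (by simp)
      rcases eq_or_lt_of_le ht1 with hc | ht1'
      · have hζa : ζ = q a := by rw [hseq2, hc]; simp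
        rcases hchord u v a huv (by rw [← hζa]; exact hζ1) with h | h
        · exact hmemV a (by simp [h]) (by simp)
        · exact hmemV a (by simp [h]) (by simp)
      by_cases hx12 : (P u).1 = (P v).1
      · by_cases hx34 : (P a).1 = (P b).1
        · -- both edges vertical
          have hζx1 : ζ.1 = (P u).1 := by rw [hx1, ← hx12]; ring
          have hζx2 : ζ.1 = (P a).1 := by rw [hx2, ← hx34]; ring
          have h13 : (P a).1 = (P u).1 := by rw [← hζx2, hζx1]
          have hY11 : f (min (P u).2 (P v).2) ≤ ζ.2 := by
            rw [hmono.monotone.map_min, hy1]; exact min_le_combo hs0 hs1 _ _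
          have hY21 : f (min (P a).2 (P b).2) ≤ ζ.2 := by
            rw [hmono.monotone.map_min, hy2]; exact min_le_combo ht0 ht1 _ _
          have hY12 : ζ.2 ≤ f (max (P u).2 (P v).2) := by
            rw [hmono.monotone.map_max, hy1]; exact combo_le_max hs0 hs1 _ _
          have hY22 : ζ.2 ≤ f (max (P a).2 (P b).2) := by
            rw [hmono.monotone.map_max, hy2]; exact combo_le_max ht0 ht1 _ _
          have hc1 : min (P u).2 (P v).2 ≤ max (P a).2 (P b).2 :=
            hmono.le_iff_le.1 (le_trans hY11 hY22)
          have hc2 : min (P a).2 (P b).2 ≤ max (P u).2 (P v).2 :=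
            hmono.le_iff_le.1 (le_trans hY21 hY12)
          have hm1s : ((P u).1, max (min (P u).2 (P v).2) (min (P a).2 (P b).2))
              ∈ segment ℝ (P u) (P v) :=
            vert_seg hx12 (le_max_left _ _) (max_le min_le_max hc2)
          have hm2s : ((P u).1, max (min (P u).2 (P v).2) (min (P a).2 (P b).2))
              ∈ segment ℝ (P a) (P b) := by
            have hh := vert_seg hx34 (le_max_right (min (P u).2 (P v).2) (min (P a).2 (P b).2))
              (max_le hc1 min_le_max)
            rwa [h13] at hh
          have hmm : ((P u).1, max (min (P u).2 (P v).2) (min (P a).2 (P b).2))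
              ∈ segment ℝ (P u) (P v) ∩ segment ℝ (P a) (P b) := ⟨hm1s, hm2s⟩
          rw [hSP] at hmm
          exact hmm
        · -- edge (u,v) vertical, edge (a,b) not
          have hb12 : (P u).2 ≠ (P v).2 := fun h => huvne (Prod.ext hx12 h)
          have hζx1 : ζ.1 = (P u).1 := by rw [hx1, ← hx12]; ring
          apply core_mixed hconv hmono (P u).1 (P u).2 (P v).2
            (P a).1 (P a).2 (P b).1 (P b).2 hx34 hb12 s t hs0'.le hs1'.le ht0' ht1'
            (hζx1.symm.trans hx2) (hy1.symm.trans hy2)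
            (hlift a b hab u) (by rw [hx12]; exact hlift a b hab v)
          intro σ τ h0 h1 h2 h3 hxe hye
          exact HendA σ τ h0 h1 h2 h3 (by rw [← hx12]; exact hxe) hye
      · by_cases hx34 : (P a).1 = (P b).1
        · -- edge (a,b) vertical, edge (u,v) not
          have hb34 : (P a).2 ≠ (P b).2 := fun h => habne (Prod.ext hx34 h)
          have hζx2 : ζ.1 = (P a).1 := by rw [hx2, ← hx34]; ring
          apply core_mixed hconv hmono (P a).1 (P a).2 (P b).2
            (P u).1 (P u).2 (P v).1 (P v).2 hx12 hb34 t s ht0'.le ht1'.le hs0' hs1'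
            (hζx2.symm.trans hx1) (hy2.symm.trans hy1)
            (hlift u v huv a) (by rw [hx34]; exact hlift u v huv b)
          intro σ τ h0 h1 h2 h3 hxe hye
          obtain ⟨hh1, hh2⟩ := HendA τ σ h2 h3 h0 h1
            (by rw [← hxe, ← hx34]) (by rw [← hye])
          exact ⟨hh2, hh1⟩
        · -- both edges non-vertical
          have HendS : ∀ σ τ : ℝ, 0 ≤ σ → σ ≤ 1 → 0 ≤ τ → τ ≤ 1 →
              σ * (P a).1 + (1 - σ) * (P b).1 = τ * (P u).1 + (1 - τ) * (P v).1 →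
              σ * (P a).2 + (1 - σ) * (P b).2 = τ * (P u).2 + (1 - τ) * (P v).2 →
              (σ = 0 ∨ σ = 1) ∧ (τ = 0 ∨ τ = 1) := by
            intro σ τ h0 h1 h2 h3 hxe hye
            obtain ⟨hh1, hh2⟩ := HendA τ σ h2 h3 h0 h1 hxe.symm hye.symm
            exact ⟨hh2, hh1⟩
          have HneS1 : ¬((P a).1 = (P u).1 ∧ (P a).2 = (P u).2 ∧
              (P b).1 = (P v).1 ∧ (P b).2 = (P v).2) := by
            rintro ⟨e1, e2, e3, e4⟩; exact Hne1 ⟨e1.symm, e2.symm, e3.symm, e4.symm⟩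
          have HneS2 : ¬((P a).1 = (P v).1 ∧ (P a).2 = (P v).2 ∧
              (P b).1 = (P u).1 ∧ (P b).2 = (P u).2) := by
            rintro ⟨e1, e2, e3, e4⟩; exact Hne2 ⟨e3.symm, e4.symm, e1.symm, e2.symm⟩
          rcases lt_trichotomy (s * (P u).2 + (1 - s) * (P v).2)
              (t * (P a).2 + (1 - t) * (P b).2) with hor | hor | hor
          · exact core_nonvert hconv hmono (P a).1 (P a).2 (P b).1 (P b).2
              (P u).1 (P u).2 (P v).1 (P v).2 hx34 hx12 t s ht0' ht1' hs0' hs1'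
              (hx2.symm.trans hx1) (hy2.symm.trans hy1) hor
              (hlift u v huv a) (hlift u v huv b)
              HendS Hq31 Hq41 Hq13 Hq23 HneS1 HneS2
          · obtain ⟨hcs, _⟩ := HendA s t hs0'.le hs1'.le ht0'.le ht1'.le
              (hx1.symm.trans hx2) hor
            rcases hcs with h | h <;> linarith
          · exact core_nonvert hconv hmono (P u).1 (P u).2 (P v).1 (P v).2
              (P a).1 (P a).2 (P b).1 (P b).2 hx12 hx34 s t hs0' hs1' ht0' ht1'
              (hx1.symm.trans hx2) (hy1.symm.trans hy2) hor
              (hlift a b hab u) (hlift a b hab v)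
              HendA Hq13 Hq23 Hq31 Hq41 Hne1 Hne2
    · -- exactly one shared vertex
      intro z hz
      have hSP := hd2 z hz
      have hzuv : z ∈ ({u, v} : Set V) := by
        have hm : z ∈ ({u, v} : Set V) ∩ {a, b} := by rw [hz]; exact rfl
        exact hm.1
      have hzab : z ∈ ({a, b} : Set V) := by
        have hm : z ∈ ({u, v} : Set V) ∩ {a, b} := by rw [hz]; exact rfl
        exact hm.2
      have hshared : ∀ w : V, w ∈ ({u, v} : Set V) → w ∈ ({a, b} : Set V) → w = z := by
        intro w h1 h2
        have hm : w ∈ ({u, v} : Set V) ∩ {a, b} := ⟨h1, h2⟩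
        rw [hz] at hm
        exact hm
      have hqz1 : q z ∈ segment ℝ (q u) (q v) := by
        rcases Set.mem_insert_iff.1 hzuv with h | h
        · rw [h]; exact left_mem_segment ℝ _ _
        · rw [Set.mem_singleton_iff.1 h]; exact right_mem_segment ℝ _ _
      have hqz2 : q z ∈ segment ℝ (q a) (q b) := by
        rcases Set.mem_insert_iff.1 hzab with h | h
        · rw [h]; exact left_mem_segment ℝ _ _
        · rw [Set.mem_singleton_iff.1 h]; exact right_mem_segment ℝ _ _
      have HendB : ∀ σ τ : ℝ, 0 ≤ σ → σ ≤ 1 → 0 ≤ τ → τ ≤ 1 →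
          σ * (P u).1 + (1 - σ) * (P v).1 = τ * (P a).1 + (1 - τ) * (P b).1 →
          σ * (P u).2 + (1 - σ) * (P v).2 = τ * (P a).2 + (1 - τ) * (P b).2 →
          (σ = 0 ∨ σ = 1) ∧ (τ = 0 ∨ τ = 1) := by
        intro σ τ h0 h1 h2 h3 hxe hye
        have heq : σ • P u + (1 - σ) • P v = τ • P a + (1 - τ) • P b := by
          rw [combo_pair, combo_pair]; exact Prod.ext hxe hye
        have hm1 : σ • P u + (1 - σ) • P v ∈ segment ℝ (P u) (P v) := param_seg h0 h1 _ _
        have hm2 : σ • P u + (1 - σ) • P v ∈ segment ℝ (P a) (P b) := by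
          rw [heq]; exact param_seg h2 h3 _ _
        have hmz : σ • P u + (1 - σ) • P v = P z := by
          have hm : σ • P u + (1 - σ) • P v ∈
              segment ℝ (P u) (P v) ∩ segment ℝ (P a) (P b) := ⟨hm1, hm2⟩
          rw [hSP] at hm
          exact hm
        constructor
        · rcases Set.mem_insert_iff.1 hzuv with h | h
          · right; exact combo_endpoint1 huvne (by rw [hmz, h])
          · left; exact combo_endpoint0 huvne (by rw [hmz, Set.mem_singleton_iff.1 h])
        · rcases Set.mem_insert_iff.1 hzab with h | h
          · right
            refine combo_endpoint1 habne ?_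
            rw [← heq, hmz, h]
          · left
            refine combo_endpoint0 habne ?_
            rw [← heq, hmz, Set.mem_singleton_iff.1 h]
      apply Set.Subset.antisymm
      · intro ζ hζ
        obtain ⟨hζ1, hζ2⟩ := hζ
        obtain ⟨s, hs0, hs1, hseq1⟩ := seg_param hζ1
        obtain ⟨t, ht0, ht1, hseq2⟩ := seg_param hζ2
        have hx1 : ζ.1 = s * (P u).1 + (1 - s) * (P v).1 := by
          have hh := congrArg Prod.fst hseq1
          rw [hqP u, hqP v, combo_pair] at hh; exact hh
        have hy1 : ζ.2 = s * f (P u).2 + (1 - s) * f (P v).2 := by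
          have hh := congrArg Prod.snd hseq1
          rw [hqP u, hqP v, combo_pair] at hh; exact hh
        have hx2 : ζ.1 = t * (P a).1 + (1 - t) * (P b).1 := by
          have hh := congrArg Prod.fst hseq2
          rw [hqP a, hqP b, combo_pair] at hh; exact hh
        have hy2 : ζ.2 = t * f (P a).2 + (1 - t) * f (P b).2 := by
          have hh := congrArg Prod.snd hseq2
          rw [hqP a, hqP b, combo_pair] at hh; exact hh
        rw [Set.mem_singleton_iff]
        rcases eq_or_lt_of_le hs0 with hc | hs0'
        · have hζv : ζ = q v := by rw [hseq1, ← hc]; simp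
          have hvz : v = z := by
            rcases hchord a b v hab (by rw [← hζv]; exact hζ2) with h | h
            · exact hshared v (by simp) (by simp [h])
            · exact hshared v (by simp) (by simp [h])
          rw [hζv, hvz]
        rcases eq_or_lt_of_le hs1 with hc | hs1'
        · have hζu : ζ = q u := by rw [hseq1, hc]; simp
          have huz : u = z := by
            rcases hchord a b u hab (by rw [← hζu]; exact hζ2) with h | h
            · exact hshared u (by simp) (by simp [h])
            · exact hshared u (by simp) (by simp [h])
          rw [hζu, huz]
        rcases eq_or_lt_of_le ht0 with hc | ht0'
        · have hζb : ζ = q b := by rw [hseq2, ← hc]; simp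
          have hbz : b = z := by
            rcases hchord u v b huv (by rw [← hζb]; exact hζ1) with h | h
            · exact hshared b (by simp [h]) (by simp)
            · exact hshared b (by simp [h]) (by simp)
          rw [hζb, hbz]
        rcases eq_or_lt_of_le ht1 with hc | ht1'
        · have hζa : ζ = q a := by rw [hseq2, hc]; simp
          have haz : a = z := by
            rcases hchord u v a huv (by rw [← hζa]; exact hζ1) with h | h
            · exact hshared a (by simp [h]) (by simp)
            · exact hshared a (by simp [h]) (by simp)
          rw [hζa, haz]
        by_cases hx12 : (P u).1 = (P v).1
        · by_cases hx34 : (P a).1 = (P b).1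
          · -- both vertical : ζ must be q z
            have hζx1 : ζ.1 = (P u).1 := by rw [hx1, ← hx12]; ring
            have hζx2 : ζ.1 = (P a).1 := by rw [hx2, ← hx34]; ring
            have h13 : (P a).1 = (P u).1 := by rw [← hζx2, hζx1]
            have hY11 : f (min (P u).2 (P v).2) ≤ ζ.2 := by
              rw [hmono.monotone.map_min, hy1]; exact min_le_combo hs0 hs1 _ _
            have hY21 : f (min (P a).2 (P b).2) ≤ ζ.2 := by
              rw [hmono.monotone.map_min, hy2]; exact min_le_combo ht0 ht1 _ _
            have hY12 : ζ.2 ≤ f (max (P u).2 (P v).2) := by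
              rw [hmono.monotone.map_max, hy1]; exact combo_le_max hs0 hs1 _ _
            have hY22 : ζ.2 ≤ f (max (P a).2 (P b).2) := by
              rw [hmono.monotone.map_max, hy2]; exact combo_le_max ht0 ht1 _ _
            have hc1 : min (P u).2 (P v).2 ≤ max (P a).2 (P b).2 :=
              hmono.le_iff_le.1 (le_trans hY11 hY22)
            have hc2 : min (P a).2 (P b).2 ≤ max (P u).2 (P v).2 :=
              hmono.le_iff_le.1 (le_trans hY21 hY12)
            have hm1s : ((P u).1, max (min (P u).2 (P v).2) (min (P a).2 (P b).2))
                ∈ segment ℝ (P u) (P v) :=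
              vert_seg hx12 (le_max_left _ _) (max_le min_le_max hc2)
            have hm2s : ((P u).1, max (min (P u).2 (P v).2) (min (P a).2 (P b).2))
                ∈ segment ℝ (P a) (P b) := by
              have hh := vert_seg hx34 (le_max_right (min (P u).2 (P v).2) (min (P a).2 (P b).2))
                (max_le hc1 min_le_max)
              rwa [h13] at hh
            have hps : ((P u).1, max (min (P u).2 (P v).2) (min (P a).2 (P b).2)) = P z := by
              have hmm : ((P u).1, max (min (P u).2 (P v).2) (min (P a).2 (P b).2))
                  ∈ segment ℝ (P u) (P v) ∩ segment ℝ (P a) (P b) := ⟨hm1s, hm2s⟩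
              rw [hSP] at hmm
              exact hmm
            have hm1t : ((P u).1, min (max (P u).2 (P v).2) (max (P a).2 (P b).2))
                ∈ segment ℝ (P u) (P v) :=
              vert_seg hx12 (le_min min_le_max hc1) (min_le_left _ _)
            have hm2t : ((P u).1, min (max (P u).2 (P v).2) (max (P a).2 (P b).2))
                ∈ segment ℝ (P a) (P b) := by
              have hh := vert_seg hx34 (le_min hc2 min_le_max)
                (min_le_right (max (P u).2 (P v).2) (max (P a).2 (P b).2))
              rwa [h13] at hh
            have hpt : ((P u).1, min (max (P u).2 (P v).2) (max (P a).2 (P b).2)) = P z := by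
              have hmm : ((P u).1, min (max (P u).2 (P v).2) (max (P a).2 (P b).2))
                  ∈ segment ℝ (P u) (P v) ∩ segment ℝ (P a) (P b) := ⟨hm1t, hm2t⟩
              rw [hSP] at hmm
              exact hmm
            have hyeq : max (min (P u).2 (P v).2) (min (P a).2 (P b).2)
                = min (max (P u).2 (P v).2) (max (P a).2 (P b).2) :=
              congrArg Prod.snd (hps.trans hpt.symm)
            have hfys : f (max (min (P u).2 (P v).2) (min (P a).2 (P b).2)) ≤ ζ.2 := by
              rw [hmono.monotone.map_max]; exact max_le hY11 hY21
            have hfyt : ζ.2 ≤ f (min (max (P u).2 (P v).2) (max (P a).2 (P b).2)) := by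
              rw [hmono.monotone.map_min]; exact le_min hY12 hY22
            have hζ2v : ζ.2 = f (max (min (P u).2 (P v).2) (min (P a).2 (P b).2)) := by
              refine le_antisymm ?_ hfys
              rw [hyeq]; exact hfyt
            rw [hqP z]
            apply pair_eq
            · rw [hζx1]
              have h1 := congrArg Prod.fst hps
              exact h1
            · rw [hζ2v]
              have h2 := congrArg Prod.snd hps
              exact congrArg f h2
          · -- edge (u,v) vertical, edge (a,b) not : impossible
            exfalso
            have hb12 : (P u).2 ≠ (P v).2 := fun h => huvne (Prod.ext hx12 h)
            have hζx1 : ζ.1 = (P u).1 := by rw [hx1, ← hx12]; ring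
            apply core_mixed hconv hmono (P u).1 (P u).2 (P v).2
              (P a).1 (P a).2 (P b).1 (P b).2 hx34 hb12 s t hs0'.le hs1'.le ht0' ht1'
              (hζx1.symm.trans hx2) (hy1.symm.trans hy2)
              (hlift a b hab u) (by rw [hx12]; exact hlift a b hab v)
            intro σ τ h0 h1 h2 h3 hxe hye
            exact HendB σ τ h0 h1 h2 h3 (by rw [← hx12]; exact hxe) hye
        · by_cases hx34 : (P a).1 = (P b).1
          · exfalso
            have hb34 : (P a).2 ≠ (P b).2 := fun h => habne (Prod.ext hx34 h)
            have hζx2 : ζ.1 = (P a).1 := by rw [hx2, ← hx34]; ring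
            apply core_mixed hconv hmono (P a).1 (P a).2 (P b).2
              (P u).1 (P u).2 (P v).1 (P v).2 hx12 hb34 t s ht0'.le ht1'.le hs0' hs1'
              (hζx2.symm.trans hx1) (hy2.symm.trans hy1)
              (hlift u v huv a) (by rw [hx34]; exact hlift u v huv b)
            intro σ τ h0 h1 h2 h3 hxe hye
            obtain ⟨hh1, hh2⟩ := HendB τ σ h2 h3 h0 h1
              (by rw [← hxe, ← hx34]) (by rw [← hye])
            exact ⟨hh2, hh1⟩
          · exfalso
            have HendS : ∀ σ τ : ℝ, 0 ≤ σ → σ ≤ 1 → 0 ≤ τ → τ ≤ 1 →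
                σ * (P a).1 + (1 - σ) * (P b).1 = τ * (P u).1 + (1 - τ) * (P v).1 →
                σ * (P a).2 + (1 - σ) * (P b).2 = τ * (P u).2 + (1 - τ) * (P v).2 →
                (σ = 0 ∨ σ = 1) ∧ (τ = 0 ∨ τ = 1) := by
              intro σ τ h0 h1 h2 h3 hxe hye
              obtain ⟨hh1, hh2⟩ := HendB τ σ h2 h3 h0 h1 hxe.symm hye.symm
              exact ⟨hh2, hh1⟩
            have HneS1 : ¬((P a).1 = (P u).1 ∧ (P a).2 = (P u).2 ∧
                (P b).1 = (P v).1 ∧ (P b).2 = (P v).2) := by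
              rintro ⟨e1, e2, e3, e4⟩; exact Hne1 ⟨e1.symm, e2.symm, e3.symm, e4.symm⟩
            have HneS2 : ¬((P a).1 = (P v).1 ∧ (P a).2 = (P v).2 ∧
                (P b).1 = (P u).1 ∧ (P b).2 = (P u).2) := by
              rintro ⟨e1, e2, e3, e4⟩; exact Hne2 ⟨e3.symm, e4.symm, e1.symm, e2.symm⟩
            rcases lt_trichotomy (s * (P u).2 + (1 - s) * (P v).2)
                (t * (P a).2 + (1 - t) * (P b).2) with hor | hor | hor
            · exact core_nonvert hconv hmono (P a).1 (P a).2 (P b).1 (P b).2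
                (P u).1 (P u).2 (P v).1 (P v).2 hx34 hx12 t s ht0' ht1' hs0' hs1'
                (hx2.symm.trans hx1) (hy2.symm.trans hy1) hor
                (hlift u v huv a) (hlift u v huv b)
                HendS Hq31 Hq41 Hq13 Hq23 HneS1 HneS2
            · obtain ⟨hcs, _⟩ := HendB s t hs0'.le hs1'.le ht0'.le ht1'.le
                (hx1.symm.trans hx2) hor
              rcases hcs with h | h <;> linarith
            · exact core_nonvert hconv hmono (P u).1 (P u).2 (P v).1 (P v).2
                (P a).1 (P a).2 (P b).1 (P b).2 hx12 hx34 s t hs0' hs1' ht0' ht1'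
                (hx1.symm.trans hx2) (hy1.symm.trans hy2) hor
                (hlift a b hab u) (hlift a b hab v)
                HendB Hq13 Hq23 Hq31 Hq41 Hne1 Hne2
      · intro x hx
        rw [Set.mem_singleton_iff] at hx
        subst hx
        exact ⟨hqz1, hqz2⟩
end
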